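/- arXiv:2508.05438 — 4 statements merged into one kernel-verified Lean document; each statement's English description precedes it below -/
import Mathlib

section
/- Let (X,d) be a metric space and δ ≥ 0 a constant such that the four-point condition min((x,z)_w, (y,z)_w) ≤ (x,y)_w + δ holds for all x,y,z,w ∈ X, where (a,b)_c = ½(d(a,c) + d(b,c) − d(a,b)) is the Gromov product. Let x,y,z,w ∈ X and α ∈ ℝ₊ satisfy (x,z)_y ≤ α, (y,w)_z ≤ α and d(y,z) > 2α + δ. Then d(x,y) + d(y,z) + d(z,w) ≤ d(x,w) + 4α + 2δ. -/
/-- The Gromov product `(x,y)_z = ½(d(x,z) + d(y,z) − d(x,y))`. -/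
noncomputable def gromovProd {X : Type*} [MetricSpace X] (x y z : X) : ℝ :=
  (dist x z + dist y z - dist x y) / 2

/-- In a metric space satisfying the four-point condition with constant
`δ ≥ 0`, if `(x,z)_y ≤ α`, `(y,w)_z ≤ α` and `d(y,z) > 2α + δ`, then
`d(x,y) + d(y,z) + d(z,w) ≤ d(x,w) + 4α + 2δ`. -/
theorem stmt1 {X : Type*} [MetricSpace X] (δ : ℝ) (hδ : 0 ≤ δ)
    (hyp : ∀ x y z w : X, min (gromovProd x z w) (gromovProd y z w) ≤ gromovProd x y w + δ)
    (x y z w : X) (α : ℝ) (hα : 0 ≤ α)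
    (h1 : gromovProd x z y ≤ α) (h2 : gromovProd y w z ≤ α)
    (h3 : 2 * α + δ < dist y z) :
    dist x y + dist y z + dist z w ≤ dist x w + 4 * α + 2 * δ := by
  have key := hyp x z w y
  unfold gromovProd at *
  have e1 : dist y w = dist w y := dist_comm y w
  have e2 : dist z w = dist w z := dist_comm z w
  have e3 : dist y z = dist z y := dist_comm y z
  have e4 : dist x w = dist w x := dist_comm x w
  -- gromovProd z w y > α + δ
  have hzw : α + δ < (dist z y + dist w y - dist z w) / 2 := by
    have hyw : dist y z + dist w z - 2 * α ≤ dist y w := by linarith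
    linarith
  have kmin : min ((dist x y + dist w y - dist x w) / 2) ((dist z y + dist w y - dist z w) / 2) ≤ α + δ := le_trans key (by linarith)
  rcases min_le_iff.mp kmin with h | h
  · have hyw : dist y z + dist w z - 2 * α ≤ dist y w := by linarith
    linarith
  · linarith
end

section
/- Let G be a hyperbolic group with finite symmetric generating set S, word length |·|, and let δ ≥ 1 be a constant such that the geometric realization X of the Cayley graph of (G,S) satisfies: δ-thin geodesic triangles, the four-point condition min((x,z)_w,(y,z)_w) ≤ (x,y)_w + δ, the bound (x,y)_z ≤ d(z,[x,y]) ≤ (x,y)_z + δ for geodesics, and d(z,p) ≤ (x,y)_z + δ(log n + 1) for paths p of length ≤ n from x to y. There exists a constant A (depending only on G and S) such that for every conjugacy class C of G there is a subset 𝒫_C ⊆ C with |𝒫_C| ≤ A·max(|C|,1), where |C| = min{|x| : x ∈ C}, such that every x ∈ C can be written x = g h g⁻¹ with g ∈ G, h ∈ 𝒫_C, and |g| + |h| + |g⁻¹| ≤ |x| + 14δ. -/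
/-- `γ : ℝ → X` is a geodesic from `x` to `y`, parametrized by arclength on `[0, dist x y]`. -/
def IsGeodesicFrom {X : Type*} [MetricSpace X] (γ : ℝ → X) (x y : X) : Prop :=
  γ 0 = x ∧ γ (dist x y) = y ∧
    ∀ s ∈ Set.Icc (0 : ℝ) (dist x y), ∀ t ∈ Set.Icc (0 : ℝ) (dist x y),
      dist (γ s) (γ t) = |s - t|

/-- The image of the geodesic `γ` from `x` to `y` (the geodesic segment `[x,y]`). -/
def geodSeg {X : Type*} [MetricSpace X] (γ : ℝ → X) (x y : X) : Set X :=
  γ '' Set.Icc (0 : ℝ) (dist x y)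

/-- `X` is a geodesic metric space. -/
def GeodesicSpace (X : Type*) [MetricSpace X] : Prop :=
  ∀ x y : X, ∃ γ : ℝ → X, IsGeodesicFrom γ x y

/-- Every geodesic triangle of `X` is `δ`-thin: each side is contained in the
`δ`-neighbourhood of the union of the other two sides. -/
def ThinTriangles (X : Type*) [MetricSpace X] (δ : ℝ) : Prop :=
  ∀ (x y z : X) (γ₁ γ₂ γ₃ : ℝ → X),
    IsGeodesicFrom γ₁ x y → IsGeodesicFrom γ₂ y z → IsGeodesicFrom γ₃ z x →
    ∀ p ∈ geodSeg γ₁ x y, Metric.infDist p (geodSeg γ₂ y z ∪ geodSeg γ₃ z x) ≤ δ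

/-- The four-point condition with constant `δ`. -/
def FourPointCondition (X : Type*) [MetricSpace X] (δ : ℝ) : Prop :=
  ∀ x y z w : X, min (gromovProd x z w) (gromovProd y z w) ≤ gromovProd x y w + δ

/-- The Gromov product approximates the distance to a geodesic, up to `δ`. -/
def GromovProdApproxGeod (X : Type*) [MetricSpace X] (δ : ℝ) : Prop :=
  ∀ (x y : X) (γ : ℝ → X), IsGeodesicFrom γ x y → ∀ z : X,
    gromovProd x y z ≤ Metric.infDist z (geodSeg γ x y) ∧
      Metric.infDist z (geodSeg γ x y) ≤ gromovProd x y z + δ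

/-- Logarithmic Morse bound: any point is at distance at most `(x,y)_z + δ(log n + 1)` from
any path of length `≤ n` joining `x` to `y`. -/
def LogPathBound (X : Type*) [MetricSpace X] (δ : ℝ) : Prop :=
  ∀ (x y z : X) (n : ℝ), 1 ≤ n → ∀ p : ℝ → X,
    LipschitzOnWith 1 p (Set.Icc (0 : ℝ) n) → p 0 = x → p n = y →
      Metric.infDist z (p '' Set.Icc (0 : ℝ) n) ≤ gromovProd x y z + δ * (Real.log n + 1)

/-- The word length of `g` with respect to the generating set `S`. -/
noncomputable def wordLength {G : Type*} [Group G] (S : Set G) (g : G) : ℕ :=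
  sInf {n | ∃ l : List G, (∀ x ∈ l, x ∈ S) ∧ l.prod = g ∧ l.length = n}

/-- `|C| = min {|x| : x ∈ C}`, the minimal word length in a conjugacy class `C`. -/
noncomputable def minConjLength {G : Type*} [Group G] (S : Set G) (C : Set G) : ℕ :=
  sInf (wordLength S '' C)

/-!
For `𝒫_C` take the products of the cyclic permutations of a shortest word of `C`, together with
the elements of `C` of length at most `20δ`. Each element of `𝒫_C` has a geodesic word all of
whose cyclic permutations again spell elements of `𝒫_C`.

Given `x ∈ C`, conjugate it into `𝒫_C` by a shortest possible `w₀`, say `h = w₀⁻¹ x w₀`. If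
`w₀ ≠ 1`, removing the last letter of `w₀` shows that `|h| > 20δ - 2`; this is what makes the
four-point condition bite below. Translated by `w₀`, the prefixes of a geodesic word for `h` form
a piece of an axis of `x` of length `|h|`, running from `w₀` to `x w₀`. Each point `Λ` of it has
`Λ⁻¹ x Λ ∈ 𝒫_C`, so by minimality of `w₀` both `1` and `x` are at distance `≥ |w₀|` from the
whole axis. Hence the Gromov products of its endpoints, seen from `1` and from `x`, are at least
`|w₀| - δ - 1/2`, and the four-point condition at `w₀` gives `|x| ≥ 2|w₀| + |h| - 6δ - 2`.
-/
section WordLength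
variable {G : Type*} [Group G] {S : Set G}

theorem wordLength_prod_le_length {l : List G} (hl : ∀ a ∈ l, a ∈ S) :
    wordLength S l.prod ≤ l.length :=
  Nat.sInf_le ⟨l, hl, rfl, rfl⟩

theorem wordLength_le_one_of_mem {s : G} (hs : s ∈ S) : wordLength S s ≤ 1 := by
  simpa using wordLength_prod_le_length (S := S) (l := [s]) (by simpa using hs)

theorem exists_word_length_eq_wordLength (hSsymm : ∀ s ∈ S, s⁻¹ ∈ S)
    (hSgen : Subgroup.closure S = ⊤) (g : G) :
    ∃ l : List G, (∀ a ∈ l, a ∈ S) ∧ l.prod = g ∧ l.length = wordLength S g := by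
  refine Nat.sInf_mem (s := {n | ∃ l : List G, (∀ a ∈ l, a ∈ S) ∧ l.prod = g ∧ l.length = n}) ?_
  have hg : g ∈ (Subgroup.closure S).toSubmonoid := by simp [hSgen]
  rw [Subgroup.closure_toSubmonoid] at hg
  obtain ⟨l, hl, rfl⟩ := Submonoid.exists_list_of_mem_closure hg
  refine ⟨l.length, l, fun a ha => ?_, rfl, rfl⟩
  rcases hl a ha with h | h
  exacts [h, inv_inv a ▸ hSsymm _ h]

theorem wordLength_mul_le (hSsymm : ∀ s ∈ S, s⁻¹ ∈ S) (hSgen : Subgroup.closure S = ⊤) (g h : G) :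
    wordLength S (g * h) ≤ wordLength S g + wordLength S h := by
  obtain ⟨l₁, hl₁, rfl, h₁⟩ := exists_word_length_eq_wordLength hSsymm hSgen g
  obtain ⟨l₂, hl₂, rfl, h₂⟩ := exists_word_length_eq_wordLength hSsymm hSgen h
  rw [← h₁, ← h₂, ← List.length_append, ← List.prod_append]
  exact wordLength_prod_le_length fun a ha => (List.mem_append.mp ha).elim (hl₁ a) (hl₂ a)

theorem wordLength_inv_le (hSsymm : ∀ s ∈ S, s⁻¹ ∈ S) (hSgen : Subgroup.closure S = ⊤) (g : G) :
    wordLength S g⁻¹ ≤ wordLength S g := by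
  obtain ⟨l, hl, rfl, hlen⟩ := exists_word_length_eq_wordLength hSsymm hSgen g
  rw [List.prod_inv_reverse, ← hlen]
  refine (wordLength_prod_le_length fun a ha => ?_).trans_eq (by simp)
  obtain ⟨b, hb, rfl⟩ := List.mem_map.mp (List.mem_reverse.mp ha)
  exact hSsymm b (hl b hb)

theorem wordLength_inv (hSsymm : ∀ s ∈ S, s⁻¹ ∈ S) (hSgen : Subgroup.closure S = ⊤) (g : G) :
    wordLength S g⁻¹ = wordLength S g :=
  (wordLength_inv_le hSsymm hSgen g).antisymm (by simpa using wordLength_inv_le hSsymm hSgen g⁻¹)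

theorem wordLength_conj_le (hSsymm : ∀ s ∈ S, s⁻¹ ∈ S) (hSgen : Subgroup.closure S = ⊤)
    (w g : G) : wordLength S (w⁻¹ * g * w) ≤ wordLength S g + 2 * wordLength S w := by
  have h₁ := wordLength_mul_le hSsymm hSgen (w⁻¹ * g) w
  have h₂ := wordLength_mul_le hSsymm hSgen w⁻¹ g
  rw [wordLength_inv hSsymm hSgen] at h₂
  omega

theorem finite_setOf_wordLength_le (hSfin : S.Finite) (hSsymm : ∀ s ∈ S, s⁻¹ ∈ S)
    (hSgen : Subgroup.closure S = ⊤) (R : ℝ) : {g : G | (wordLength S g : ℝ) ≤ R}.Finite := by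
  have : Finite S := hSfin
  refine ((List.finite_length_le S ⌈R⌉₊).image fun l => (l.map (↑)).prod).subset fun g hg => ?_
  obtain ⟨l, hl, rfl, hlen⟩ := exists_word_length_eq_wordLength hSsymm hSgen g
  lift l to List S using hl
  have hl : (l.map Subtype.val).length ≤ ⌈R⌉₊ :=
    hlen.trans_le (by exact_mod_cast hg.trans (Nat.le_ceil R))
  exact ⟨l, by simpa using hl, rfl⟩

end WordLength

section CyclicallyClosed
variable {G : Type*} [Group G] {S : Set G}

def IsGeodesicWord (S : Set G) (l : List G) : Prop :=
  (∀ a ∈ l, a ∈ S) ∧ wordLength S l.prod = l.length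

theorem IsGeodesicWord.of_append (hSsymm : ∀ s ∈ S, s⁻¹ ∈ S) (hSgen : Subgroup.closure S = ⊤)
    {l₁ l₂ : List G} (h : IsGeodesicWord S (l₁ ++ l₂)) :
    IsGeodesicWord S l₁ ∧ IsGeodesicWord S l₂ := by
  obtain ⟨hS, hlen⟩ := h
  have hS₁ : ∀ a ∈ l₁, a ∈ S := fun a ha => hS a (List.mem_append_left _ ha)
  have hS₂ : ∀ a ∈ l₂, a ∈ S := fun a ha => hS a (List.mem_append_right _ ha)
  have h₁ := wordLength_prod_le_length hS₁
  have h₂ := wordLength_prod_le_length hS₂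
  have := wordLength_mul_le hSsymm hSgen l₁.prod l₂.prod
  rw [← List.prod_append, hlen, List.length_append] at this
  exact ⟨⟨hS₁, by omega⟩, ⟨hS₂, by omega⟩⟩

theorem IsGeodesicWord.wordLength_inv_prod_take_mul_prod_take (hSsymm : ∀ s ∈ S, s⁻¹ ∈ S)
    (hSgen : Subgroup.closure S = ⊤) {l : List G} (hl : IsGeodesicWord S l) {j k : ℕ}
    (hjk : j ≤ k) (hk : k ≤ l.length) :
    wordLength S ((l.take j).prod⁻¹ * (l.take k).prod) = k - j := by
  have hsplit : l.take k = l.take j ++ (l.drop j).take (k - j) := by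
    rw [← List.take_add, Nat.add_sub_cancel' hjk]
  rw [← List.take_append_drop j l] at hl
  rw [← List.take_append_drop (k - j) (l.drop j)] at hl
  rw [hsplit, List.prod_append, inv_mul_cancel_left,
    ((hl.of_append hSsymm hSgen).2.of_append hSsymm hSgen).1.2]
  simp only [List.length_take, List.length_drop]
  omega

theorem conj_prod_take (l : List G) (k : ℕ) :
    (l.take k).prod⁻¹ * l.prod * (l.take k).prod = (l.drop k ++ l.take k).prod := by
  conv_lhs => rw [← List.prod_take_mul_prod_drop l k]
  rw [List.prod_append]
  group

theorem List.IsRotated.isConj_prod {l l' : List G} (h : l ~r l') : IsConj l.prod l'.prod := by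
  obtain ⟨n, rfl⟩ := h
  rw [List.rotate_eq_drop_append_take_mod, ← conj_prod_take]
  exact isConj_iff.mpr ⟨(l.take (n % l.length)).prod⁻¹, by rw [inv_inv]⟩

def CyclicallyClosed (S P : Set G) : Prop :=
  ∀ v ∈ P, ∃ l : List G, IsGeodesicWord S l ∧ l.prod = v ∧ ∀ l', l' ~r l → l'.prod ∈ P

theorem CyclicallyClosed.union {P Q : Set G} (hP : CyclicallyClosed S P)
    (hQ : CyclicallyClosed S Q) : CyclicallyClosed S (P ∪ Q) := by
  rintro v (hv | hv)
  · obtain ⟨l, hl, hv, hrot⟩ := hP v hv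
    exact ⟨l, hl, hv, fun l' h => Or.inl (hrot l' h)⟩
  · obtain ⟨l, hl, hv, hrot⟩ := hQ v hv
    exact ⟨l, hl, hv, fun l' h => Or.inr (hrot l' h)⟩

theorem cyclicallyClosed_setOf_isConj (hSsymm : ∀ s ∈ S, s⁻¹ ∈ S)
    (hSgen : Subgroup.closure S = ⊤) (c : G) (R : ℝ) :
    CyclicallyClosed S {h | IsConj c h ∧ (wordLength S h : ℝ) ≤ R} := by
  rintro v ⟨hcv, hvR⟩
  obtain ⟨l, hlS, rfl, hlen⟩ := exists_word_length_eq_wordLength hSsymm hSgen v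
  refine ⟨l, ⟨hlS, hlen.symm⟩, rfl, fun l' hl' => ⟨hcv.trans hl'.symm.isConj_prod, ?_⟩⟩
  have h := wordLength_prod_le_length fun a ha => hlS a (hl'.mem_iff.mp ha)
  rw [hl'.perm.length_eq, hlen] at h
  exact le_trans (by exact_mod_cast h) hvR

def rotationProds (l : List G) : Set G :=
  {g | ∃ l', l' ~r l ∧ l'.prod = g}

theorem rotationProds_eq (l : List G) :
    rotationProds l = {g | g ∈ l.cyclicPermutations.map List.prod} := by
  ext g
  simp [rotationProds, List.mem_cyclicPermutations_iff]

theorem finite_rotationProds (l : List G) : (rotationProds l).Finite := by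
  rw [rotationProds_eq]
  exact List.finite_toSet _

theorem ncard_rotationProds_le (l : List G) : (rotationProds l).ncard ≤ l.length + 1 := by
  classical
  rw [rotationProds_eq, ← List.coe_toFinset, Set.ncard_coe_finset]
  refine (List.toFinset_card_le _).trans ?_
  rcases eq_or_ne l [] with rfl | hl
  · simp
  · simp [List.length_cyclicPermutations_of_ne_nil l hl]

theorem cyclicallyClosed_rotationProds {l : List G} (hl : ∀ a ∈ l, a ∈ S)
    (hmin : ∀ l', l' ~r l → l.length ≤ wordLength S l'.prod) :
    CyclicallyClosed S (rotationProds l) := by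
  rintro - ⟨l', hl', rfl⟩
  have hS : ∀ a ∈ l', a ∈ S := fun a ha => hl a (hl'.mem_iff.mp ha)
  refine ⟨l', ⟨hS, ?_⟩, rfl, fun l'' h => ⟨l'', h.trans hl', rfl⟩⟩
  have := wordLength_prod_le_length hS
  have := hmin l' hl'
  rw [hl'.perm.length_eq] at *
  omega

end CyclicallyClosed

section Geodesic
variable {X : Type*} [MetricSpace X]

theorem isGeodesicFrom_of_dist_le {γ : ℝ → X} {x y : X} (h₀ : γ 0 = x) (h₁ : γ (dist x y) = y)
    (hlip : ∀ s ∈ Set.Icc 0 (dist x y), ∀ t ∈ Set.Icc 0 (dist x y), s ≤ t →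
      dist (γ s) (γ t) ≤ t - s) :
    IsGeodesicFrom γ x y := by
  have key : ∀ s ∈ Set.Icc 0 (dist x y), ∀ t ∈ Set.Icc 0 (dist x y), s ≤ t →
      dist (γ s) (γ t) = t - s := by
    intro s hs t ht hst
    have h0s := hlip 0 ⟨le_rfl, dist_nonneg⟩ s hs hs.1
    have htD := hlip t ht _ ⟨dist_nonneg, le_rfl⟩ ht.2
    rw [h₀] at h0s
    rw [h₁] at htD
    have := dist_triangle4 x (γ s) (γ t) y
    linarith [hlip s hs t ht hst]
  refine ⟨h₀, h₁, fun s hs t ht => ?_⟩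
  rcases le_total s t with hst | hts
  · rw [key s hs t ht hst, abs_of_nonpos (by linarith)]; ring
  · rw [dist_comm, key t ht s hs hts, abs_of_nonneg (by linarith)]

theorem IsGeodesicFrom.append {x y z : X} {γ₁ γ₂ : ℝ → X} (h₁ : IsGeodesicFrom γ₁ x y)
    (h₂ : IsGeodesicFrom γ₂ y z) (hxz : dist x z = dist x y + dist y z) :
    ∃ γ : ℝ → X, IsGeodesicFrom γ x z ∧ geodSeg γ x z ⊆ geodSeg γ₁ x y ∪ geodSeg γ₂ y z := by
  obtain ⟨h₁0, h₁1, h₁d⟩ := h₁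
  obtain ⟨h₂0, h₂1, h₂d⟩ := h₂
  set a := dist x y
  set b := dist y z
  have ha : 0 ≤ a := dist_nonneg
  have hb : 0 ≤ b := dist_nonneg
  refine ⟨fun t => if t ≤ a then γ₁ t else γ₂ (t - a), isGeodesicFrom_of_dist_le ?_ ?_ ?_, ?_⟩
  · simp [ha, h₁0]
  · rw [hxz]
    split_ifs with h
    · have hb0 : b = 0 := by linarith
      rw [← h₂1, hb0, add_zero, h₁1, h₂0]
    · rw [add_sub_cancel_left, h₂1]
  · rw [hxz]
    rintro s ⟨hs0, hs⟩ t ⟨ht0, ht⟩ hst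
    split_ifs with hsa hta hta
    · rw [h₁d s ⟨hs0, hsa⟩ t ⟨ht0, hta⟩, abs_of_nonpos (by linarith)]; linarith
    · have e₁ := h₁d s ⟨hs0, hsa⟩ a ⟨ha, le_rfl⟩
      have e₂ := h₂d 0 ⟨le_rfl, hb⟩ (t - a) ⟨by linarith, by linarith⟩
      rw [h₁1] at e₁
      rw [h₂0] at e₂
      calc dist (γ₁ s) (γ₂ (t - a)) ≤ dist (γ₁ s) y + dist y (γ₂ (t - a)) := dist_triangle _ _ _
        _ = t - s := by rw [e₁, e₂, abs_of_nonpos (by linarith), abs_of_nonpos (by linarith)]; ring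
    · linarith
    · rw [h₂d (s - a) ⟨by linarith, by linarith⟩ (t - a) ⟨by linarith, by linarith⟩,
        abs_of_nonpos (by linarith)]
      linarith
  · rintro - ⟨t, ⟨ht0, ht⟩, rfl⟩
    rw [hxz] at ht
    dsimp only
    split_ifs with hta
    · exact Or.inl ⟨t, ⟨ht0, hta⟩, rfl⟩
    · exact Or.inr ⟨t - a, ⟨by linarith, by linarith⟩, rfl⟩

theorem IsGeodesicFrom.dist_le_half {x y : X} {γ : ℝ → X} (h : IsGeodesicFrom γ x y)
    (hxy : dist x y = 1) {w : X} (hw : w ∈ geodSeg γ x y) :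
    dist w x ≤ 1 / 2 ∨ dist w y ≤ 1 / 2 := by
  obtain ⟨h₀, h₁, hd⟩ := h
  obtain ⟨t, ht, rfl⟩ := hw
  have h0 : (0 : ℝ) ∈ Set.Icc 0 (dist x y) := ⟨le_rfl, dist_nonneg⟩
  have h1 : dist x y ∈ Set.Icc 0 (dist x y) := ⟨dist_nonneg, le_rfl⟩
  have e₀ : dist (γ t) x = t := by rw [← h₀, hd t ht 0 h0, sub_zero, abs_of_nonneg ht.1]
  have e₁ : dist (γ t) y = 1 - t := by
    rw [← h₁, hd t ht _ h1, hxy, abs_of_nonpos (by linarith [ht.2])]; ring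
  rw [e₀, e₁]
  rcases le_total t (1 / 2) with h | h
  · exact Or.inl h
  · right; linarith

theorem exists_geodesic_near_chain (hX : GeodesicSpace X) (F : ℕ → X) (L : ℕ)
    (hF : ∀ j ≤ L, ∀ k ≤ L, dist (F j) (F k) = |(j : ℝ) - k|) :
    ∃ γ, IsGeodesicFrom γ (F 0) (F L) ∧
      ∀ w ∈ geodSeg γ (F 0) (F L), ∃ j ≤ L, dist w (F j) ≤ 1 / 2 := by
  induction L with
  | zero =>
    obtain ⟨γ, hγ⟩ := hX (F 0) (F 0)
    refine ⟨γ, hγ, fun w hw => ⟨0, le_rfl, ?_⟩⟩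
    obtain ⟨t, ht, rfl⟩ := hw
    rw [dist_self, Set.Icc_self, Set.mem_singleton_iff] at ht
    rw [ht, hγ.1, dist_self]
    norm_num
  | succ L ih =>
    obtain ⟨γ₁, hγ₁, hnear₁⟩ := ih fun j hj k hk => hF j (by omega) k (by omega)
    obtain ⟨γ₂, hγ₂⟩ := hX (F L) (F (L + 1))
    have hstep : dist (F L) (F (L + 1)) = 1 := by
      rw [hF L (by omega) (L + 1) le_rfl]; push_cast; norm_num
    have hsum : dist (F 0) (F (L + 1)) = dist (F 0) (F L) + dist (F L) (F (L + 1)) := by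
      rw [hstep, hF 0 (by omega) (L + 1) le_rfl, hF 0 (by omega) L (by omega)]
      push_cast
      rw [zero_sub, zero_sub, abs_neg, abs_neg, abs_of_nonneg (by positivity),
        abs_of_nonneg (by positivity)]
    obtain ⟨γ, hγ, hsub⟩ := hγ₁.append hγ₂ hsum
    refine ⟨γ, hγ, fun w hw => ?_⟩
    rcases hsub hw with h | h
    · obtain ⟨j, hj, hjw⟩ := hnear₁ w h
      exact ⟨j, by omega, hjw⟩
    · rcases hγ₂.dist_le_half hstep h with h' | h'
      · exact ⟨L, by omega, h'⟩
      · exact ⟨L + 1, le_rfl, h'⟩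

end Geodesic

section Gromov
variable {X : Type*} [MetricSpace X] {δ : ℝ}

theorem le_gromovProd_of_chain (hX : GeodesicSpace X) (happrox : GromovProdApproxGeod X δ)
    (F : ℕ → X) (L : ℕ) (hF : ∀ j ≤ L, ∀ k ≤ L, dist (F j) (F k) = |(j : ℝ) - k|)
    {z : X} {m : ℝ} (hz : ∀ j ≤ L, m ≤ dist z (F j)) :
    m - 1 / 2 - δ ≤ gromovProd (F 0) (F L) z := by
  obtain ⟨γ, hγ, hnear⟩ := exists_geodesic_near_chain hX F L hF
  have hseg : m - 1 / 2 ≤ Metric.infDist z (geodSeg γ (F 0) (F L)) := by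
    refine Metric.le_infDist ?_ |>.mpr fun w hw => ?_
    · exact ⟨γ 0, 0, ⟨le_rfl, dist_nonneg⟩, rfl⟩
    obtain ⟨j, hj, hjw⟩ := hnear w hw
    linarith [hz j hj, dist_triangle z w (F j)]
  linarith [(happrox _ _ γ hγ z).2]

theorem le_dist_of_gromovProd (hfour : FourPointCondition X δ) {a b p q : X} {m ℓ : ℝ}
    (hap : dist a p = m) (hbq : dist b q = m) (hpq : dist p q = ℓ) (hℓ : 3 * δ + 1 < ℓ)
    (ha : m - 1 / 2 - δ ≤ gromovProd p q a) (hb : m - 1 / 2 - δ ≤ gromovProd p q b) :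
    2 * m + ℓ - 6 * δ - 2 ≤ dist a b := by
  have h := hfour a q b p
  simp only [gromovProd] at h ha hb
  rcases min_le_iff.mp h with h | h <;>
    linarith [dist_comm p a, dist_comm q b, dist_comm q p, dist_comm q a, dist_comm p b]

end Gromov

section Covering
variable {G : Type*} [Group G] {S : Set G} {X : Type*} [MetricSpace X] {δ : ℝ}

theorem lt_wordLength_conj_add_two (hSsymm : ∀ s ∈ S, s⁻¹ ∈ S) (hSgen : Subgroup.closure S = ⊤)
    {P : Set G} {x w₀ : G} {R : ℝ}
    (hball : ∀ w, (wordLength S (w⁻¹ * x * w) : ℝ) ≤ R → w⁻¹ * x * w ∈ P)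
    (hmin : ∀ w, w⁻¹ * x * w ∈ P → wordLength S w₀ ≤ wordLength S w)
    (hw₀ : wordLength S w₀ ≠ 0) :
    R < wordLength S (w₀⁻¹ * x * w₀) + 2 := by
  obtain ⟨l, hlS, rfl, hlen⟩ := exists_word_length_eq_wordLength hSsymm hSgen w₀
  obtain ⟨l', s, rfl⟩ := (List.eq_nil_or_concat' l).resolve_left <| by
    rintro rfl
    exact hw₀ hlen.symm
  have hs : s ∈ S := hlS s (by simp)
  set w := (l' ++ [s]).prod
  have hl' : wordLength S l'.prod < wordLength S w := by
    have := wordLength_prod_le_length fun a ha => hlS a (List.mem_append_left _ ha)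
    simp only [List.length_append, List.length_singleton] at hlen
    omega
  by_contra! hR
  have hshort : wordLength S (l'.prod⁻¹ * x * l'.prod) ≤ wordLength S (w⁻¹ * x * w) + 2 := by
    have hconj : l'.prod⁻¹ * x * l'.prod = s⁻¹⁻¹ * (w⁻¹ * x * w) * s⁻¹ := by
      simp only [w, List.prod_append, List.prod_singleton]
      group
    have := wordLength_conj_le hSsymm hSgen s⁻¹ (w⁻¹ * x * w)
    have := wordLength_le_one_of_mem (hSsymm s hs)
    rw [hconj]
    omega
  exact (hmin _ (hball _ (le_trans (by exact_mod_cast hshort) hR))).not_gt hl'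

theorem two_mul_wordLength_add_le (hSsymm : ∀ s ∈ S, s⁻¹ ∈ S) (hSgen : Subgroup.closure S = ⊤)
    (ι : G → X) (hι : ∀ g h : G, dist (ι g) (ι h) = (wordLength S (g⁻¹ * h) : ℝ))
    (hX : GeodesicSpace X) (hfour : FourPointCondition X δ) (happrox : GromovProdApproxGeod X δ)
    {P : Set G} (hP : CyclicallyClosed S P) {x w₀ : G} (hv₀ : w₀⁻¹ * x * w₀ ∈ P)
    (hmin : ∀ w, w⁻¹ * x * w ∈ P → wordLength S w₀ ≤ wordLength S w)
    (hlong : 3 * δ + 1 < wordLength S (w₀⁻¹ * x * w₀)) :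
    2 * (wordLength S w₀ : ℝ) + wordLength S (w₀⁻¹ * x * w₀) - 6 * δ - 2 ≤ wordLength S x := by
  obtain ⟨l, hl, hlv, hrot⟩ := hP _ hv₀
  set m := wordLength S w₀
  set L := l.length
  -- `Λ` runs along an axis of `x` from `w₀` to `x * w₀`
  set Λ : ℕ → G := fun j => w₀ * (l.take j).prod
  have hΛ : ∀ j, (Λ j)⁻¹ * x * Λ j ∈ P := fun j => by
    have hr : (l.drop j ++ l.take j) ~r l := by
      simpa using (List.isRotated_append (l := l.take j) (l' := l.drop j)).symm
    convert hrot _ hr using 1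
    rw [← conj_prod_take, hlv]
    simp only [Λ]
    group
  have hF : ∀ j ≤ L, ∀ k ≤ L, dist (ι (Λ j)) (ι (Λ k)) = |(j : ℝ) - k| := by
    have key : ∀ j k, j ≤ k → k ≤ L → wordLength S ((Λ j)⁻¹ * Λ k) = k - j := fun j k hjk hk => by
      rw [← hl.wordLength_inv_prod_take_mul_prod_take hSsymm hSgen hjk hk]
      simp only [Λ]
      group
    intro j hj k hk
    rw [hι]
    rcases le_total j k with hjk | hkj
    · rw [key j k hjk hk, abs_of_nonpos (by simpa using hjk)]
      push_cast [hjk]; ring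
    · rw [← wordLength_inv hSsymm hSgen, mul_inv_rev, inv_inv, key k j hkj hj,
        abs_of_nonneg (by simpa using hkj)]
      push_cast [hkj]; ring
  have h1 : ∀ j ≤ L, (m : ℝ) ≤ dist (ι 1) (ι (Λ j)) := fun j _ => by
    rw [hι, inv_one, one_mul]
    exact_mod_cast hmin _ (hΛ j)
  have hx : ∀ j ≤ L, (m : ℝ) ≤ dist (ι x) (ι (Λ j)) := fun j _ => by
    rw [hι]
    exact_mod_cast hmin (x⁻¹ * Λ j) (by convert hΛ j using 1; group)
  have hΛ0 : dist (ι 1) (ι (Λ 0)) = m := by simp [hι, Λ, m]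
  have hΛL : dist (ι x) (ι (Λ L)) = m := by
    rw [hι]
    simp only [Λ, L, List.take_length, hlv]
    rw [show x⁻¹ * (w₀ * (w₀⁻¹ * x * w₀)) = w₀ by group]
  have hL : dist (ι (Λ 0)) (ι (Λ L)) = L := by simpa using hF 0 (Nat.zero_le _) L le_rfl
  have hLv : (L : ℝ) = wordLength S (w₀⁻¹ * x * w₀) := by rw [← hlv, hl.2]
  have := le_dist_of_gromovProd hfour hΛ0 hΛL hL (hLv ▸ hlong)
    (le_gromovProd_of_chain hX happrox (ι ∘ Λ) L hF h1)
    (le_gromovProd_of_chain hX happrox (ι ∘ Λ) L hF hx)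
  rw [hι, inv_one, one_mul, hLv] at this
  exact this

theorem exists_eq_mul_mul_inv_of_cyclicallyClosed (hSsymm : ∀ s ∈ S, s⁻¹ ∈ S)
    (hSgen : Subgroup.closure S = ⊤) (ι : G → X)
    (hι : ∀ g h : G, dist (ι g) (ι h) = (wordLength S (g⁻¹ * h) : ℝ)) (hδ : 1 ≤ δ)
    (hX : GeodesicSpace X) (hfour : FourPointCondition X δ) (happrox : GromovProdApproxGeod X δ)
    {P : Set G} (hP : CyclicallyClosed S P) {x : G}
    (hball : ∀ w, (wordLength S (w⁻¹ * x * w) : ℝ) ≤ 20 * δ → w⁻¹ * x * w ∈ P)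
    (hx : ∃ w, w⁻¹ * x * w ∈ P) :
    ∃ g h : G, h ∈ P ∧ x = g * h * g⁻¹ ∧
      (wordLength S g : ℝ) + wordLength S h + wordLength S g⁻¹ ≤ (wordLength S x : ℝ) + 14 * δ := by
  obtain ⟨w₀, hw₀, hmin⟩ := (measure (wordLength S)).wf.has_min {w | w⁻¹ * x * w ∈ P} hx
  replace hmin : ∀ w, w⁻¹ * x * w ∈ P → wordLength S w₀ ≤ wordLength S w :=
    fun w hw => not_lt.mp (hmin w hw)
  refine ⟨w₀, _, hw₀, by group, ?_⟩
  rw [wordLength_inv hSsymm hSgen]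
  rcases Nat.eq_zero_or_pos (wordLength S w₀) with h0 | hpos
  · have := wordLength_conj_le hSsymm hSgen w₀ x
    rw [h0] at this ⊢
    have : (wordLength S (w₀⁻¹ * x * w₀) : ℝ) ≤ wordLength S x := by exact_mod_cast this
    push_cast
    linarith
  · have := lt_wordLength_conj_add_two hSsymm hSgen hball hmin hpos.ne'
    have := two_mul_wordLength_add_le hSsymm hSgen ι hι hX hfour happrox hP hw₀ hmin (by linarith)
    linarith

end Covering

theorem stmt5_general {G : Type*} [Group G] (S : Set G) (hSfin : S.Finite)
    (hSsymm : ∀ s ∈ S, s⁻¹ ∈ S) (hSgen : Subgroup.closure S = ⊤)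
    (X : Type*) [MetricSpace X] (ι : G → X)
    (hι : ∀ g h : G, dist (ι g) (ι h) = (wordLength S (g⁻¹ * h) : ℝ))
    (δ : ℝ) (hδ : 1 ≤ δ)
    (hgeod : GeodesicSpace X)
    (hfour : FourPointCondition X δ) (happrox : GromovProdApproxGeod X δ) :
    ∃ A : ℝ, ∀ C : Set G, (∃ x₀ : G, C = {y | IsConj x₀ y}) →
      ∃ P : Set G, P ⊆ C ∧ P.Finite ∧
        (P.ncard : ℝ) ≤ A * max (minConjLength S C : ℝ) 1 ∧
        ∀ x ∈ C, ∃ g h : G, h ∈ P ∧ x = g * h * g⁻¹ ∧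
          (wordLength S g : ℝ) + wordLength S h + wordLength S g⁻¹ ≤
            (wordLength S x : ℝ) + 14 * δ := by
  set B := {g : G | (wordLength S g : ℝ) ≤ 20 * δ}
  have hB : B.Finite := finite_setOf_wordLength_le hSfin hSsymm hSgen (20 * δ)
  refine ⟨B.ncard + 2, ?_⟩
  rintro C ⟨x₀, rfl⟩
  set n := minConjLength S {y | IsConj x₀ y}
  obtain ⟨c₀, hc₀, hc₀len⟩ : n ∈ wordLength S '' {y | IsConj x₀ y} :=
    Nat.sInf_mem ⟨_, x₀, IsConj.refl x₀, rfl⟩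
  obtain ⟨l₀, hl₀S, rfl, hl₀len⟩ := exists_word_length_eq_wordLength hSsymm hSgen c₀
  set Q := {h | IsConj x₀ h ∧ (wordLength S h : ℝ) ≤ 20 * δ}
  have hrot : rotationProds l₀ ⊆ {y | IsConj x₀ y} := by
    rintro - ⟨l, hl, rfl⟩
    exact hc₀.trans hl.symm.isConj_prod
  have hP : CyclicallyClosed S (rotationProds l₀ ∪ Q) :=
    (cyclicallyClosed_rotationProds hl₀S fun l hl => (hl₀len.trans hc₀len).trans_le
      (Nat.sInf_le ⟨_, hrot ⟨l, hl, rfl⟩, rfl⟩)).union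
      (cyclicallyClosed_setOf_isConj hSsymm hSgen x₀ _)
  refine ⟨rotationProds l₀ ∪ Q, Set.union_subset hrot fun h hh => hh.1,
    (finite_rotationProds l₀).union (hB.subset fun h hh => hh.2), ?_, fun x hx => ?_⟩
  · have hcard : (rotationProds l₀ ∪ Q).ncard ≤ n + 1 + B.ncard :=
      (Set.ncard_union_le _ _).trans (add_le_add (hl₀len.trans hc₀len ▸ ncard_rotationProds_le l₀)
        (Set.ncard_le_ncard (fun h hh => hh.2) hB))
    calc ((rotationProds l₀ ∪ Q).ncard : ℝ) ≤ n + 1 + B.ncard := by exact_mod_cast hcard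
      _ ≤ (B.ncard + 2) * max (n : ℝ) 1 := by
        nlinarith [le_max_left (n : ℝ) 1, le_max_right (n : ℝ) 1, (B.ncard).cast_nonneg (α := ℝ)]
  · refine exists_eq_mul_mul_inv_of_cyclicallyClosed hSsymm hSgen ι hι hδ hgeod hfour happrox hP
      (fun w hw => Or.inr ⟨hx.trans (isConj_iff.mpr ⟨w⁻¹, by group⟩), hw⟩) ?_
    obtain ⟨c, hc⟩ := isConj_iff.mp (hx.symm.trans hc₀)
    exact ⟨c⁻¹, Or.inl ⟨l₀, List.IsRotated.refl l₀, by rw [← hc]; group⟩⟩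

/-- Let `G` be hyperbolic with finite symmetric generating set `S`, and `δ ≥ 1`
a constant such that the geometric realization `X` of the Cayley graph (a geodesic space into
which `G` embeds isometrically for the word metric) has `δ`-thin triangles and satisfies the
four-point condition, the Gromov-product approximation of the distance to geodesics, and the
logarithmic Morse bound for paths, all with constant `δ`. There is a constant `A` such that for
every conjugacy class `C` there is `𝒫_C ⊆ C` with `|𝒫_C| ≤ A·max(|C|,1)` such that every
`x ∈ C` is `x = g h g⁻¹` with `h ∈ 𝒫_C` and `|g| + |h| + |g⁻¹| ≤ |x| + 14δ`. -/
theorem stmt5 {G : Type*} [Group G] (S : Set G) (hSfin : S.Finite)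
    (hSsymm : ∀ s ∈ S, s⁻¹ ∈ S) (hSgen : Subgroup.closure S = ⊤)
    (X : Type*) [MetricSpace X] (ι : G → X)
    (hι : ∀ g h : G, dist (ι g) (ι h) = (wordLength S (g⁻¹ * h) : ℝ))
    (δ : ℝ) (hδ : 1 ≤ δ)
    (hgeod : GeodesicSpace X) (hthin : ThinTriangles X δ)
    (hfour : FourPointCondition X δ) (happrox : GromovProdApproxGeod X δ)
    (hlog : LogPathBound X δ) :
    ∃ A : ℝ, ∀ C : Set G, (∃ x₀ : G, C = {y | IsConj x₀ y}) →
      ∃ P : Set G, P ⊆ C ∧ P.Finite ∧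
        (P.ncard : ℝ) ≤ A * max (minConjLength S C : ℝ) 1 ∧
        ∀ x ∈ C, ∃ g h : G, h ∈ P ∧ x = g * h * g⁻¹ ∧
          (wordLength S g : ℝ) + wordLength S h + wordLength S g⁻¹ ≤
            (wordLength S x : ℝ) + 14 * δ :=
  stmt5_general S hSfin hSsymm hSgen X ι hι δ hδ hgeod hfour happrox
end

section
/- Let G be a hyperbolic group with finite symmetric generating set S, word length |·|, and δ ≥ 1 a hyperbolicity constant for the Cayley graph as in Proposition 1 (δ-thin triangles, four-point condition, Gromov-product approximation of distance to geodesics, and logarithmic Morse bound, all with constant δ). Let C be a conjugacy class of G with |C| ≥ 16δ, where |C| = min{|x| : x ∈ C}, and let d ≥ 2 be an integer. Then every x ∈ C^d = {y^d : y ∈ C} can be written x = g h^d g⁻¹ with g ∈ G, h ∈ C, and |g| + |h| + |h^{d−2}| + |h| + |g⁻¹| ≤ |x| + 34δ. -/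
set_option linter.unusedSectionVars false
/-- auxiliary Gromov product of lattice points -/
noncomputable def gp {G X : Type*} [MetricSpace X] (ι : G → X) (a b c : G) : ℝ :=
  gromovProd (ι a) (ι b) (ι c)

private lemma wordLength_le_list {G : Type*} [Group G] (S : Set G) {l : List G}
    (hl : ∀ x ∈ l, x ∈ S) : wordLength S l.prod ≤ l.length :=
  Nat.sInf_le ⟨l, hl, rfl, rfl⟩

private lemma wordLength_one {G : Type*} [Group G] (S : Set G) : wordLength S (1 : G) = 0 :=
  Nat.le_zero.mp (by simpa using wordLength_le_list S (l := []) (by simp))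

private lemma exists_geodesic_word {G : Type*} [Group G] {S : Set G}
    (hSsymm : ∀ s ∈ S, s⁻¹ ∈ S) (hSgen : Subgroup.closure S = ⊤) (g : G) :
    ∃ l : List G, (∀ x ∈ l, x ∈ S) ∧ l.prod = g ∧ l.length = wordLength S g := by
  have hg : g ∈ Subgroup.closure S := hSgen ▸ Subgroup.mem_top g
  have hg2 : g ∈ Submonoid.closure (S ∪ S⁻¹) := by
    rw [← Subgroup.closure_toSubmonoid]; exact hg
  have hUS : S ∪ S⁻¹ = S := by
    apply Set.union_eq_self_of_subset_right
    intro y hy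
    have := hSsymm y⁻¹ (by simpa using hy)
    simpa using this
  rw [hUS] at hg2
  obtain ⟨l, hl, hprod⟩ := Submonoid.exists_list_of_mem_closure hg2
  have hne : {n | ∃ l : List G, (∀ x ∈ l, x ∈ S) ∧ l.prod = g ∧ l.length = n}.Nonempty :=
    ⟨l.length, l, hl, hprod, rfl⟩
  exact Nat.sInf_mem hne

private lemma conj_pow' {G : Type*} [Group G] (u h : G) (n : ℕ) :
    (u * h * u⁻¹) ^ n = u * h ^ n * u⁻¹ := by
  induction n with
  | zero => simp
  | succ n ih => rw [pow_succ, pow_succ, ih]; group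

section gplemmas
variable {G X : Type*} [Group G] [MetricSpace X] {S : Set G} {ι : G → X}

private lemma gp_eq (hι : ∀ g h : G, dist (ι g) (ι h) = (wordLength S (g⁻¹ * h) : ℝ))
    (a b c : G) :
    gp ι a b c = ((wordLength S (a⁻¹ * c) : ℝ) + (wordLength S (b⁻¹ * c) : ℝ)
      - (wordLength S (a⁻¹ * b) : ℝ)) / 2 := by
  simp [gp, gromovProd, hι]

private lemma gp_inv (hι : ∀ g h : G, dist (ι g) (ι h) = (wordLength S (g⁻¹ * h) : ℝ))
    (k a b c : G) : gp ι (k * a) (k * b) (k * c) = gp ι a b c := by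
  rw [gp_eq hι, gp_eq hι]
  have h1 : (k * a)⁻¹ * (k * c) = a⁻¹ * c := by group
  have h2 : (k * b)⁻¹ * (k * c) = b⁻¹ * c := by group
  have h3 : (k * a)⁻¹ * (k * b) = a⁻¹ * b := by group
  rw [h1, h2, h3]

private lemma gp_symm (ι : G → X) (a b c : G) : gp ι a b c = gp ι b a c := by
  unfold gp gromovProd
  rw [dist_comm (ι a) (ι b)]
  ring

private lemma gp_nonneg (ι : G → X) (a b c : G) : 0 ≤ gp ι a b c := by
  have h := dist_triangle (ι a) (ι c) (ι b)
  rw [dist_comm (ι c) (ι b)] at h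
  unfold gp gromovProd
  linarith

private lemma gp_le_left (ι : G → X) (a b c : G) : gp ι a b c ≤ dist (ι a) (ι c) := by
  have h := dist_triangle (ι b) (ι a) (ι c)
  rw [dist_comm (ι b) (ι a)] at h
  unfold gp gromovProd
  linarith

end gplemmas

private lemma min_cut {A B r : ℝ} (h : min A B ≤ r) (hA : r < A) : B ≤ r := by
  rcases min_cases A B with ⟨he, _⟩ | ⟨he, _⟩ <;> rw [he] at h
  · linarith
  · exact h


set_option maxHeartbeats 1000000 in
/-- With `G`, `S`, `X`, `ι`, `δ` as in Proposition 1 (δ-thin triangles,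
four-point condition, Gromov-product approximation of the distance to geodesics, logarithmic
Morse bound, all with constant `δ ≥ 1`), let `C` be a conjugacy class with `|C| ≥ 16δ` and
`d ≥ 2`. Then every `x ∈ C^d` can be written `x = g h^d g⁻¹` with `h ∈ C` and
`|g| + |h| + |h^{d−2}| + |h| + |g⁻¹| ≤ |x| + 34δ`. -/
theorem stmt6 {G : Type*} [Group G] (S : Set G) (hSfin : S.Finite)
    (hSsymm : ∀ s ∈ S, s⁻¹ ∈ S) (hSgen : Subgroup.closure S = ⊤)
    (X : Type*) [MetricSpace X] (ι : G → X)
    (hι : ∀ g h : G, dist (ι g) (ι h) = (wordLength S (g⁻¹ * h) : ℝ))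
    (δ : ℝ) (hδ : 1 ≤ δ)
    (hgeod : GeodesicSpace X) (hthin : ThinTriangles X δ)
    (hfour : FourPointCondition X δ) (happrox : GromovProdApproxGeod X δ)
    (hlog : LogPathBound X δ)
    (C : Set G) (hC : ∃ x₀ : G, C = {y | IsConj x₀ y})
    (hCbig : 16 * δ ≤ (minConjLength S C : ℝ))
    (d : ℕ) (hd : 2 ≤ d)
    (x : G) (hx : x ∈ {y : G | ∃ c ∈ C, y = c ^ d}) :
    ∃ g h : G, h ∈ C ∧ x = g * h ^ d * g⁻¹ ∧
      (wordLength S g : ℝ) + wordLength S h + wordLength S (h ^ (d - 2)) +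
          wordLength S h + wordLength S g⁻¹ ≤
        (wordLength S x : ℝ) + 34 * δ := by
  classical
  obtain ⟨x₀, hCdef⟩ := hC
  obtain ⟨c, hcC, hxc⟩ := hx
  set ℓ : ℕ := minConjLength S C with hℓdef
  -- basic word-length facts
  have wlsymm : ∀ a : G, wordLength S a⁻¹ = wordLength S a := by
    intro a
    have h1 := hι 1 a
    have h2 := hι a 1
    rw [dist_comm] at h2
    rw [h1] at h2
    simp only [inv_one, one_mul, mul_one] at h2
    exact_mod_cast h2.symm
  have wltriR : ∀ a b : G, (wordLength S (a * b) : ℝ) ≤ wordLength S a + wordLength S b := by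
    intro a b
    have hT := dist_triangle (ι 1) (ι a) (ι (a * b))
    rw [hι, hι, hι] at hT
    simpa using hT
  have wltriN : ∀ a b : G, wordLength S (a * b) ≤ wordLength S a + wordLength S b := by
    intro a b; exact_mod_cast wltriR a b
  -- conjugacy class facts
  have hCx₀ : x₀ ∈ C := by rw [hCdef]; exact Set.mem_setOf.mpr (IsConj.refl x₀)
  have hCconj : ∀ y ∈ C, ∀ a : G, a * y * a⁻¹ ∈ C := by
    intro y hy a
    rw [hCdef] at hy ⊢
    exact hy.trans (isConj_iff.mpr ⟨a, rfl⟩)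
  have hCle : ∀ y ∈ C, ℓ ≤ wordLength S y := fun y hy => Nat.sInf_le ⟨y, hy, rfl⟩
  have hδ0 : (0:ℝ) < δ := by linarith
  have hℓR : (16:ℝ) * δ ≤ (ℓ : ℝ) := hCbig
  -- minimal element of C
  obtain ⟨h₀, h₀C, h₀ℓ⟩ : ∃ h₀ ∈ C, wordLength S h₀ = ℓ := by
    have hne : (wordLength S '' C).Nonempty := ⟨_, ⟨x₀, hCx₀, rfl⟩⟩
    obtain ⟨y, hy, hyy⟩ := Nat.sInf_mem hne
    exact ⟨y, hy, hyy⟩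
  have hconj₀ : IsConj h₀ c := by
    rw [hCdef] at h₀C hcC
    exact h₀C.symm.trans hcC
  obtain ⟨a₀, ha₀⟩ := isConj_iff.mp hconj₀
  -- minimizing pair
  obtain ⟨g, h, hhC, hhℓ, hxgh, hgmin⟩ :
      ∃ g h : G, h ∈ C ∧ wordLength S h = ℓ ∧ x = g * h ^ d * g⁻¹ ∧
        ∀ g' h' : G, h' ∈ C → wordLength S h' = ℓ → x = g' * h' ^ d * g'⁻¹ →
          wordLength S g ≤ wordLength S g' := by
    have hTne : {n | ∃ gg hh : G, hh ∈ C ∧ wordLength S hh = ℓ ∧ x = gg * hh ^ d * gg⁻¹ ∧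
        wordLength S gg = n}.Nonempty := by
      refine ⟨wordLength S a₀, a₀, h₀, h₀C, h₀ℓ, ?_, rfl⟩
      rw [hxc, ← ha₀, conj_pow']
    obtain ⟨gg, hh, h1, h2, h3, h4⟩ := Nat.sInf_mem hTne
    exact ⟨gg, hh, h1, h2, h3, fun g' h' hc1 hc2 hc3 =>
      h4 ▸ Nat.sInf_le ⟨g', h', hc1, hc2, hc3, rfl⟩⟩
  refine ⟨g, h, hhC, hxgh, ?_⟩
  have hhR : (wordLength S h : ℝ) = (ℓ : ℝ) := by exact_mod_cast hhℓ
  have hgR : (wordLength S g⁻¹ : ℝ) = (wordLength S g : ℝ) := by exact_mod_cast wlsymm g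
  -- four-point condition on lattice points
  have four' : ∀ a b c w : G, min (gp ι a c w) (gp ι b c w) ≤ gp ι a b w + δ :=
    fun a b c w => hfour (ι a) (ι b) (ι c) (ι w)
  -- geodesic splittings of h
  have split : ∀ t : ℕ, t ≤ ℓ → ∃ u v : G, u * v = h ∧ wordLength S u = t ∧
      wordLength S v = ℓ - t := by
    intro t ht
    obtain ⟨l, hlS, hlprod, hllen⟩ := exists_geodesic_word hSsymm hSgen h
    rw [hhℓ] at hllen
    have hprod : (l.take t).prod * (l.drop t).prod = h := by
      rw [← List.prod_append, List.take_append_drop, hlprod]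
    have h1 : wordLength S (l.take t).prod ≤ t := by
      refine le_trans (wordLength_le_list S fun y hy => hlS y (List.mem_of_mem_take hy)) ?_
      rw [List.length_take]; omega
    have h2 : wordLength S (l.drop t).prod ≤ ℓ - t := by
      refine le_trans (wordLength_le_list S fun y hy => hlS y (List.mem_of_mem_drop hy)) ?_
      rw [List.length_drop, hllen]
    have h3 : ℓ ≤ wordLength S (l.take t).prod + wordLength S (l.drop t).prod := by
      have hT := wltriN (l.take t).prod (l.drop t).prod
      rw [hprod, hhℓ] at hT
      exact hT
    exact ⟨_, _, hprod, by omega, by omega⟩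
  -- Step 1 : (1, h²)_h ≤ 2δ
  have hS2 : gp ι 1 (h ^ 2) h ≤ 2 * δ := by
    set t : ℕ := ℓ / 2 with htdef
    have ht1 : t ≤ ℓ := Nat.div_le_self _ _
    have htR1 : 2 * δ < (t:ℝ) := by
      have h1 : (ℓ:ℕ) ≤ 2 * t + 1 := by omega
      have h2 : ((ℓ:ℕ):ℝ) ≤ 2 * (t:ℝ) + 1 := by exact_mod_cast h1
      nlinarith
    have htR2 : δ < (ℓ:ℝ) - t := by
      have h1 : 2 * t ≤ ℓ := by omega
      have h2 : 2 * (t:ℝ) ≤ (ℓ:ℝ) := by exact_mod_cast h1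
      nlinarith
    obtain ⟨u, v, huv, hu, hv⟩ := split t ht1
    have hvR : (wordLength S v : ℝ) = (ℓ:ℝ) - t := by rw [hv, Nat.cast_sub ht1]
    have hcu : wordLength S (u⁻¹ * h * u) = ℓ := by
      apply le_antisymm
      · have e : u⁻¹ * h * u = v * u := by rw [← huv]; group
        rw [e]
        calc wordLength S (v * u) ≤ wordLength S v + wordLength S u := wltriN v u
          _ ≤ ℓ := by omega
      · exact hCle _ (by simpa using hCconj h hhC u⁻¹)
    have k1 : u⁻¹ * h = v := by rw [← huv]; group
    have e1 : gp ι u (h * u) h = 0 := by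
      rw [gp_eq hι]
      have i2 : (h * u)⁻¹ * h = u⁻¹ := by group
      have i3 : u⁻¹ * (h * u) = u⁻¹ * h * u := by group
      rw [k1, i2, i3, hcu]
      simp only [wlsymm]
      rw [hu, hvR]
      push_cast
      ring
    have e2 : gp ι u 1 h = (ℓ:ℝ) - t := by
      rw [gp_eq hι]
      have i2 : (1:G)⁻¹ * h = h := by group
      have i3 : u⁻¹ * 1 = u⁻¹ := by group
      rw [k1, i2, i3]
      simp only [wlsymm]
      rw [hu, hhℓ, hvR]
      push_cast
      ring
    have f1 := four' u (h * u) 1 h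
    rw [e1, e2] at f1
    have f1' : min ((ℓ:ℝ) - t) (gp ι (h * u) 1 h) ≤ δ := by linarith [f1]
    have e3 : gp ι (h * u) 1 h ≤ δ := min_cut f1' htR2
    have e4 : gp ι (h * u) (h ^ 2) h = (t:ℝ) := by
      rw [gp_eq hι]
      have i1 : (h * u)⁻¹ * h = u⁻¹ := by group
      have i2 : (h ^ 2)⁻¹ * h = h⁻¹ := by group
      have i3 : (h * u)⁻¹ * h ^ 2 = u⁻¹ * h := by group
      rw [i1, i2, i3, k1]
      simp only [wlsymm]
      rw [hu, hhℓ, hvR]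
      push_cast
      ring
    have f2 := four' (h * u) 1 (h ^ 2) h
    rw [e4] at f2
    have f2' : min ((t:ℝ)) (gp ι 1 (h ^ 2) h) ≤ 2 * δ := le_trans f2 (by linarith [e3])
    exact min_cut f2' htR1
  -- translated version along the powers of h
  have hS2' : ∀ k : ℕ, gp ι (h ^ k) (h ^ (k + 2)) (h ^ (k + 1)) ≤ 2 * δ := by
    intro k
    have e := gp_inv hι (h ^ k) 1 (h ^ 2) h
    rw [mul_one, ← pow_add, ← pow_succ] at e
    rw [e]
    exact hS2
  -- product identities along powers
  have eid : ∀ n : ℕ, gp ι 1 (h ^ (n + 1)) (h ^ n)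
      = ((wordLength S (h ^ n) : ℝ) + ℓ - wordLength S (h ^ (n + 1))) / 2 := by
    intro n
    rw [gp_eq hι]
    have i1 : (1:G)⁻¹ * h ^ n = h ^ n := by group
    have i2 : (h ^ (n + 1))⁻¹ * h ^ n = h⁻¹ := by rw [pow_succ]; group
    have i3 : (1:G)⁻¹ * h ^ (n + 1) = h ^ (n + 1) := by group
    rw [i1, i2, i3, wlsymm, hhℓ]
  have eback : ∀ n : ℕ, gp ι 1 (h ^ n) (h ^ (n + 1))
      = ((wordLength S (h ^ (n + 1)) : ℝ) + ℓ - wordLength S (h ^ n)) / 2 := by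
    intro n
    rw [gp_eq hι]
    have i1 : (1:G)⁻¹ * h ^ (n + 1) = h ^ (n + 1) := by group
    have i2 : (h ^ n)⁻¹ * h ^ (n + 1) = h := by rw [pow_succ]; group
    have i3 : (1:G)⁻¹ * h ^ n = h ^ n := by group
    rw [i1, i2, i3, hhℓ]
  -- the chain of powers is a quasigeodesic
  have hinc0 : ∀ k : ℕ, 1 ≤ k → gp ι 1 (h ^ (k + 1)) (h ^ k) ≤ 3 * δ := by
    intro k
    induction k with
    | zero => intro hk; omega
    | succ n ih =>
      intro _
      rcases Nat.eq_zero_or_pos n with hn | hn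
      · subst hn
        have hs := hS2' 0
        simp only [pow_zero] at hs
        calc gp ι 1 (h ^ (0 + 1 + 1)) (h ^ (0 + 1)) = gp ι 1 (h ^ 2) (h ^ 1) := by norm_num
          _ ≤ 2 * δ := by rw [pow_one]; exact hS2
          _ ≤ 3 * δ := by linarith
      · have ih' := ih hn
        rw [eid n] at ih'
        have einc : (wordLength S (h ^ n) : ℝ) + ℓ - 6 * δ ≤ wordLength S (h ^ (n + 1)) := by
          linarith
        have ebig : 13 * δ ≤ gp ι 1 (h ^ n) (h ^ (n + 1)) := by
          rw [eback n]; linarith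
        have f := four' (h ^ n) (h ^ (n + 2)) 1 (h ^ (n + 1))
        have f' : min (gp ι (h ^ n) 1 (h ^ (n + 1))) (gp ι (h ^ (n + 2)) 1 (h ^ (n + 1)))
            ≤ 3 * δ := le_trans f (by linarith [hS2' n])
        have fA : 3 * δ < gp ι (h ^ n) 1 (h ^ (n + 1)) := by
          rw [gp_symm ι (h ^ n) 1 (h ^ (n + 1))]; linarith
        have hc := min_cut f' fA
        rw [gp_symm ι (h ^ (n + 2)) 1 (h ^ (n + 1))] at hc
        exact hc
  have hincr : ∀ k : ℕ, 1 ≤ k →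
      (wordLength S (h ^ k) : ℝ) + ℓ - 6 * δ ≤ wordLength S (h ^ (k + 1)) := by
    intro k hk
    have hp := hinc0 k hk
    rw [eid k] at hp
    linarith
  have hlow : ∀ k : ℕ, 1 ≤ k → (ℓ:ℝ) - 6 * δ ≤ wordLength S (h ^ k) := by
    intro k
    induction k with
    | zero => intro hk; omega
    | succ n ih =>
      intro _
      rcases Nat.eq_zero_or_pos n with hn | hn
      · subst hn
        simp only [zero_add, pow_one, hhℓ]
        linarith
      · have h1 := hincr n hn
        have h2 : (0:ℝ) ≤ wordLength S (h ^ n) := Nat.cast_nonneg _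
        linarith
  -- Step 2 : minimality of g gives small products at both junctions
  have hQ : gp ι g⁻¹ h 1 ≤ 2 * δ + 1 := by
    by_contra hcon
    push_neg at hcon
    have hQnn : (0:ℝ) ≤ gp ι g⁻¹ h 1 := gp_nonneg ι _ _ _
    have hQle : gp ι g⁻¹ h 1 ≤ (ℓ:ℝ) := by
      have t1 : gp ι g⁻¹ h 1 = gp ι h g⁻¹ 1 := gp_symm ι _ _ _
      have t2 := gp_le_left ι h g⁻¹ 1
      rw [hι] at t2
      simp only [mul_one] at t2
      rw [wlsymm, hhℓ] at t2
      rw [t1]; exact t2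
    set t : ℕ := ⌊gp ι g⁻¹ h 1⌋₊ with htdef
    have htQ : (t:ℝ) ≤ gp ι g⁻¹ h 1 := Nat.floor_le hQnn
    have ht2δ : 2 * δ < (t:ℝ) := by
      have hfl := Nat.lt_floor_add_one (gp ι g⁻¹ h 1)
      linarith
    have htℓ : t ≤ ℓ := by
      have hfl := Nat.floor_le_floor hQle
      simpa using hfl
    obtain ⟨u, v, huv, hu, hv⟩ := split t htℓ
    have hvR : (wordLength S v : ℝ) = (ℓ:ℝ) - t := by rw [hv, Nat.cast_sub htℓ]
    have k1 : u⁻¹ * h = v := by rw [← huv]; group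
    have hcu : wordLength S (u⁻¹ * h * u) = ℓ := by
      apply le_antisymm
      · have e : u⁻¹ * h * u = v * u := by rw [← huv]; group
        rw [e]
        calc wordLength S (v * u) ≤ wordLength S v + wordLength S u := wltriN v u
          _ ≤ ℓ := by omega
      · exact hCle _ (by simpa using hCconj h hhC u⁻¹)
    have hmem : u⁻¹ * h * u ∈ C := by simpa using hCconj h hhC u⁻¹
    have hxnew : x = (g * u) * (u⁻¹ * h * u) ^ d * (g * u)⁻¹ := by
      rw [show u⁻¹ * h * u = u⁻¹ * h * (u⁻¹)⁻¹ by group, conj_pow', hxgh]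
      group
    have hminu : wordLength S g ≤ wordLength S (g * u) := hgmin _ _ hmem hcu hxnew
    have eA : gp ι g⁻¹ u 1 ≤ (t:ℝ) / 2 := by
      rw [gp_eq hι]
      have i1 : (g⁻¹)⁻¹ * 1 = g := by group
      have i2 : u⁻¹ * 1 = u⁻¹ := by group
      have i3 : (g⁻¹)⁻¹ * u = g * u := by group
      rw [i1, i2, i3]
      simp only [wlsymm]
      rw [hu]
      have hm : (wordLength S g : ℝ) ≤ wordLength S (g * u) := by exact_mod_cast hminu
      linarith
    have eB : gp ι u h 1 = (t:ℝ) := by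
      rw [gp_symm ι u h 1, gp_eq hι]
      have i1 : h⁻¹ * 1 = h⁻¹ := by group
      have i2 : u⁻¹ * 1 = u⁻¹ := by group
      have i3 : h⁻¹ * u = (u⁻¹ * h)⁻¹ := by group
      rw [i1, i2, i3, k1]
      simp only [wlsymm]
      rw [hhℓ, hu, hvR]
      push_cast
      ring
    have f := four' g⁻¹ u h 1
    rw [eB, min_eq_right htQ] at f
    linarith [eA]
  have hQ' : gp ι h⁻¹ g⁻¹ 1 ≤ 2 * δ + 1 := by
    by_contra hcon
    push_neg at hcon
    have hQnn : (0:ℝ) ≤ gp ι h⁻¹ g⁻¹ 1 := gp_nonneg ι _ _ _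
    have hQle : gp ι h⁻¹ g⁻¹ 1 ≤ (ℓ:ℝ) := by
      have t2 := gp_le_left ι h⁻¹ g⁻¹ 1
      rw [hι] at t2
      simp only [inv_inv, mul_one] at t2
      rw [hhℓ] at t2
      exact t2
    set t : ℕ := ⌊gp ι h⁻¹ g⁻¹ 1⌋₊ with htdef
    have htQ : (t:ℝ) ≤ gp ι h⁻¹ g⁻¹ 1 := Nat.floor_le hQnn
    have ht2δ : 2 * δ < (t:ℝ) := by
      have hfl := Nat.lt_floor_add_one (gp ι h⁻¹ g⁻¹ 1)
      linarith
    have htℓ : t ≤ ℓ := by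
      have hfl := Nat.floor_le_floor hQle
      simpa using hfl
    obtain ⟨u, v, huv, hu, hv⟩ := split (ℓ - t) (Nat.sub_le _ _)
    have hvt : wordLength S v = t := by rw [hv]; omega
    have huR : (wordLength S u : ℝ) = (ℓ:ℝ) - t := by rw [hu, Nat.cast_sub htℓ]
    have hcv : wordLength S (v * h * v⁻¹) = ℓ := by
      apply le_antisymm
      · have e : v * h * v⁻¹ = v * u := by rw [← huv]; group
        rw [e]
        calc wordLength S (v * u) ≤ wordLength S v + wordLength S u := wltriN v u
          _ ≤ ℓ := by omega
      · exact hCle _ (hCconj h hhC v)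
    have hmem : v * h * v⁻¹ ∈ C := hCconj h hhC v
    have hxnew : x = (g * v⁻¹) * (v * h * v⁻¹) ^ d * (g * v⁻¹)⁻¹ := by
      rw [conj_pow', hxgh]
      group
    have hminv : wordLength S g ≤ wordLength S (g * v⁻¹) := hgmin _ _ hmem hcv hxnew
    have eA : gp ι g⁻¹ v⁻¹ 1 ≤ (t:ℝ) / 2 := by
      rw [gp_eq hι]
      have i1 : (g⁻¹)⁻¹ * 1 = g := by group
      have i2 : (v⁻¹)⁻¹ * 1 = v := by group
      have i3 : (g⁻¹)⁻¹ * v⁻¹ = g * v⁻¹ := by group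
      rw [i1, i2, i3, hvt]
      have hm : (wordLength S g : ℝ) ≤ wordLength S (g * v⁻¹) := by exact_mod_cast hminv
      linarith
    have eB : gp ι v⁻¹ h⁻¹ 1 = (t:ℝ) := by
      rw [gp_symm ι v⁻¹ h⁻¹ 1, gp_eq hι]
      have i1 : (h⁻¹)⁻¹ * 1 = h := by group
      have i2 : (v⁻¹)⁻¹ * 1 = v := by group
      have i3 : (h⁻¹)⁻¹ * v⁻¹ = u := by rw [← huv]; group
      rw [i1, i2, i3, hhℓ, hvt, huR]
      push_cast
      ring
    have f := four' g⁻¹ v⁻¹ h⁻¹ 1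
    have s1 : gp ι g⁻¹ h⁻¹ 1 = gp ι h⁻¹ g⁻¹ 1 := gp_symm ι _ _ _
    rw [s1, eB, min_eq_right htQ] at f
    linarith [eA]
  -- first junction
  have hβ₁ : gp ι 1 (g * h) g ≤ 2 * δ + 1 := by
    have e := gp_inv hι g g⁻¹ h 1
    rw [show g * g⁻¹ = (1:G) by group, show g * (1:G) = g by group] at e
    rw [e]
    exact hQ
  have egh : (wordLength S (g * h) : ℝ)
      = wordLength S g + ℓ - 2 * gp ι 1 (g * h) g := by
    have e := gp_eq hι 1 (g * h) g
    have i1 : (1:G)⁻¹ * g = g := by group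
    have i2 : (g * h)⁻¹ * g = h⁻¹ := by group
    have i3 : (1:G)⁻¹ * (g * h) = g * h := by group
    rw [i1, i2, i3, wlsymm, hhℓ] at e
    rw [e]; ring
  have eb2 : gp ι 1 g (g * h) = (ℓ:ℝ) - gp ι 1 (g * h) g := by
    have e := gp_eq hι 1 g (g * h)
    have i1 : (1:G)⁻¹ * (g * h) = g * h := by group
    have i2 : g⁻¹ * (g * h) = h := by group
    have i3 : (1:G)⁻¹ * g = g := by group
    rw [i1, i2, i3, hhℓ] at e
    rw [e, egh]; ring
  have hb2 : 13 * δ ≤ gp ι 1 g (g * h) := by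
    rw [eb2]; linarith [hβ₁]
  -- split off the exponent
  obtain ⟨e, rfl⟩ : ∃ e, d = e + 2 := ⟨d - 2, by omega⟩
  simp only [Nat.add_sub_cancel]
  rcases Nat.eq_zero_or_pos e with he | he
  · -- d = 2
    subst he
    simp only [zero_add] at hxgh
    have eX : gp ι g (g * h ^ 2) (g * h) = gp ι 1 (h ^ 2) h := by
      have e := gp_inv hι g 1 (h ^ 2) h
      rw [mul_one] at e
      exact e
    have f := four' g (g * h ^ 2) 1 (g * h)
    have fA : 3 * δ < gp ι g 1 (g * h) := by
      rw [gp_symm ι g 1 (g * h)]; linarith [hb2]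
    have f' : min (gp ι g 1 (g * h)) (gp ι (g * h ^ 2) 1 (g * h)) ≤ 3 * δ :=
      le_trans f (by rw [eX]; linarith [hS2])
    have hβ₂ : gp ι 1 (g * h ^ 2) (g * h) ≤ 3 * δ := by
      have hc := min_cut f' fA
      rwa [gp_symm ι (g * h ^ 2) 1 (g * h)] at hc
    have egh2 : (wordLength S (g * h ^ 2) : ℝ)
        = wordLength S (g * h) + ℓ - 2 * gp ι 1 (g * h ^ 2) (g * h) := by
      have e := gp_eq hι 1 (g * h ^ 2) (g * h)
      have i1 : (1:G)⁻¹ * (g * h) = g * h := by group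
      have i2 : (g * h ^ 2)⁻¹ * (g * h) = h⁻¹ := by group
      have i3 : (1:G)⁻¹ * (g * h ^ 2) = g * h ^ 2 := by group
      rw [i1, i2, i3, wlsymm, hhℓ] at e
      rw [e]; ring
    have eb3 : gp ι 1 (g * h) (g * h ^ 2)
        = (ℓ:ℝ) - gp ι 1 (g * h ^ 2) (g * h) := by
      have e := gp_eq hι 1 (g * h) (g * h ^ 2)
      have i1 : (1:G)⁻¹ * (g * h ^ 2) = g * h ^ 2 := by group
      have i2 : (g * h)⁻¹ * (g * h ^ 2) = h := by group
      have i3 : (1:G)⁻¹ * (g * h) = g * h := by group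
      rw [i1, i2, i3, hhℓ] at e
      rw [e, egh2]; ring
    have hb3 : 13 * δ ≤ gp ι 1 (g * h) (g * h ^ 2) := by
      rw [eb3]; linarith [hβ₂]
    have eQ' : gp ι (g * h) x (g * h ^ 2) = gp ι h⁻¹ g⁻¹ 1 := by
      have e := gp_inv hι (g * h ^ 2) h⁻¹ g⁻¹ 1
      have i1 : g * h ^ 2 * h⁻¹ = g * h := by group
      have i2 : g * h ^ 2 * g⁻¹ = x := hxgh.symm
      have i3 : g * h ^ 2 * 1 = g * h ^ 2 := by group
      rw [i1, i2, i3] at e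
      exact e
    have f2 := four' (g * h) x 1 (g * h ^ 2)
    have fA2 : 3 * δ + 1 < gp ι (g * h) 1 (g * h ^ 2) := by
      rw [gp_symm ι (g * h) 1 (g * h ^ 2)]; linarith [hb3]
    have f2' : min (gp ι (g * h) 1 (g * h ^ 2)) (gp ι x 1 (g * h ^ 2)) ≤ 3 * δ + 1 :=
      le_trans f2 (by rw [eQ']; linarith [hQ'])
    have hβ₄ : gp ι 1 x (g * h ^ 2) ≤ 3 * δ + 1 := by
      have hc := min_cut f2' fA2
      rwa [gp_symm ι x 1 (g * h ^ 2)] at hc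
    have ex : (wordLength S x : ℝ)
        = wordLength S (g * h ^ 2) + wordLength S g - 2 * gp ι 1 x (g * h ^ 2) := by
      have e := gp_eq hι 1 x (g * h ^ 2)
      have i1 : (1:G)⁻¹ * (g * h ^ 2) = g * h ^ 2 := by group
      have i2 : x⁻¹ * (g * h ^ 2) = g := by rw [hxgh]; group
      have i3 : (1:G)⁻¹ * x = x := by group
      rw [i1, i2, i3] at e
      rw [e]; ring
    have hz : (wordLength S (h ^ 0) : ℝ) = 0 := by
      rw [pow_zero, wordLength_one]; norm_num
    rw [hz, hhR, hgR]
    linarith [egh, egh2, ex, hβ₁, hβ₂, hβ₄]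
  · -- d = e + 2 with e ≥ 1
    have hp1 : h ^ (e + 1) = h * h ^ e := pow_succ' h e
    have hp1' : h ^ (e + 1) = h ^ e * h := pow_succ h e
    have hp2 : h ^ (e + 2) = h * h ^ (e + 1) := by
      rw [show e + 2 = e + 1 + 1 from rfl]; exact pow_succ' h (e + 1)
    have hp2' : h ^ (e + 2) = h ^ (e + 1) * h := by
      rw [show e + 2 = e + 1 + 1 from rfl]; exact pow_succ h (e + 1)
    have hince := hincr e he
    have hlowe := hlow e he
    -- second junction
    have eA2 : gp ι g (g * h ^ (e + 1)) (g * h) = gp ι 1 (h ^ (e + 1)) h := by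
      have ee := gp_inv hι g 1 (h ^ (e + 1)) h
      rw [mul_one] at ee
      exact ee
    have vA2 : gp ι 1 (h ^ (e + 1)) h
        = ((ℓ:ℝ) + wordLength S (h ^ e) - wordLength S (h ^ (e + 1))) / 2 := by
      rw [gp_eq hι]
      have i1 : (1:G)⁻¹ * h = h := by group
      have i2 : (h ^ (e + 1))⁻¹ * h = (h ^ e)⁻¹ := by rw [hp1]; group
      have i3 : (1:G)⁻¹ * h ^ (e + 1) = h ^ (e + 1) := by group
      rw [i1, i2, i3, wlsymm, hhℓ]
    have hA2 : gp ι g (g * h ^ (e + 1)) (g * h) ≤ 3 * δ := by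
      rw [eA2, vA2]; linarith [hince]
    have f := four' g (g * h ^ (e + 1)) 1 (g * h)
    have fA : 4 * δ < gp ι g 1 (g * h) := by
      rw [gp_symm ι g 1 (g * h)]; linarith [hb2]
    have f' : min (gp ι g 1 (g * h)) (gp ι (g * h ^ (e + 1)) 1 (g * h)) ≤ 4 * δ :=
      le_trans f (by linarith [hA2])
    have hβ₂ : gp ι 1 (g * h ^ (e + 1)) (g * h) ≤ 4 * δ := by
      have hc := min_cut f' fA
      rwa [gp_symm ι (g * h ^ (e + 1)) 1 (g * h)] at hc
    have eghe1 : (wordLength S (g * h ^ (e + 1)) : ℝ)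
        = wordLength S (g * h) + wordLength S (h ^ e)
          - 2 * gp ι 1 (g * h ^ (e + 1)) (g * h) := by
      have ee := gp_eq hι 1 (g * h ^ (e + 1)) (g * h)
      have i1 : (1:G)⁻¹ * (g * h) = g * h := by group
      have i2 : (g * h ^ (e + 1))⁻¹ * (g * h) = (h ^ e)⁻¹ := by rw [hp1]; group
      have i3 : (1:G)⁻¹ * (g * h ^ (e + 1)) = g * h ^ (e + 1) := by group
      rw [i1, i2, i3, wlsymm] at ee
      rw [ee]; ring
    have eb3 : gp ι 1 (g * h) (g * h ^ (e + 1))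
        = (wordLength S (h ^ e) : ℝ) - gp ι 1 (g * h ^ (e + 1)) (g * h) := by
      have ee := gp_eq hι 1 (g * h) (g * h ^ (e + 1))
      have i1 : (1:G)⁻¹ * (g * h ^ (e + 1)) = g * h ^ (e + 1) := by group
      have i2 : (g * h)⁻¹ * (g * h ^ (e + 1)) = h ^ e := by rw [hp1]; group
      have i3 : (1:G)⁻¹ * (g * h) = g * h := by group
      rw [i1, i2, i3] at ee
      rw [ee, eghe1]; ring
    have hb3 : 6 * δ ≤ gp ι 1 (g * h) (g * h ^ (e + 1)) := by
      rw [eb3]; linarith [hβ₂, hlowe]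
    -- third junction
    have eA3 : gp ι (g * h) (g * h ^ (e + 2)) (g * h ^ (e + 1))
        = gp ι 1 (h ^ (e + 1)) (h ^ e) := by
      have ee := gp_inv hι (g * h) 1 (h ^ (e + 1)) (h ^ e)
      have i1 : g * h * 1 = g * h := by group
      have i2 : g * h * h ^ (e + 1) = g * h ^ (e + 2) := by rw [hp2]; group
      have i3 : g * h * h ^ e = g * h ^ (e + 1) := by rw [hp1]; group
      rw [i1, i2, i3] at ee
      exact ee
    have hA3 : gp ι (g * h) (g * h ^ (e + 2)) (g * h ^ (e + 1)) ≤ 3 * δ := by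
      rw [eA3]; exact hinc0 e he
    have f3 := four' (g * h) (g * h ^ (e + 2)) 1 (g * h ^ (e + 1))
    have fA3 : 4 * δ < gp ι (g * h) 1 (g * h ^ (e + 1)) := by
      rw [gp_symm ι (g * h) 1 (g * h ^ (e + 1))]; linarith [hb3]
    have f3' : min (gp ι (g * h) 1 (g * h ^ (e + 1)))
        (gp ι (g * h ^ (e + 2)) 1 (g * h ^ (e + 1))) ≤ 4 * δ :=
      le_trans f3 (by linarith [hA3])
    have hβ₃ : gp ι 1 (g * h ^ (e + 2)) (g * h ^ (e + 1)) ≤ 4 * δ := by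
      have hc := min_cut f3' fA3
      rwa [gp_symm ι (g * h ^ (e + 2)) 1 (g * h ^ (e + 1))] at hc
    have eghe2 : (wordLength S (g * h ^ (e + 2)) : ℝ)
        = wordLength S (g * h ^ (e + 1)) + ℓ
          - 2 * gp ι 1 (g * h ^ (e + 2)) (g * h ^ (e + 1)) := by
      have ee := gp_eq hι 1 (g * h ^ (e + 2)) (g * h ^ (e + 1))
      have i1 : (1:G)⁻¹ * (g * h ^ (e + 1)) = g * h ^ (e + 1) := by group
      have i2 : (g * h ^ (e + 2))⁻¹ * (g * h ^ (e + 1)) = h⁻¹ := by rw [hp2']; group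
      have i3 : (1:G)⁻¹ * (g * h ^ (e + 2)) = g * h ^ (e + 2) := by group
      rw [i1, i2, i3, wlsymm, hhℓ] at ee
      rw [ee]; ring
    have eb4 : gp ι 1 (g * h ^ (e + 1)) (g * h ^ (e + 2))
        = (ℓ:ℝ) - gp ι 1 (g * h ^ (e + 2)) (g * h ^ (e + 1)) := by
      have ee := gp_eq hι 1 (g * h ^ (e + 1)) (g * h ^ (e + 2))
      have i1 : (1:G)⁻¹ * (g * h ^ (e + 2)) = g * h ^ (e + 2) := by group
      have i2 : (g * h ^ (e + 1))⁻¹ * (g * h ^ (e + 2)) = h := by rw [hp2']; group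
      have i3 : (1:G)⁻¹ * (g * h ^ (e + 1)) = g * h ^ (e + 1) := by group
      rw [i1, i2, i3, hhℓ] at ee
      rw [ee, eghe2]; ring
    have hb4 : 12 * δ ≤ gp ι 1 (g * h ^ (e + 1)) (g * h ^ (e + 2)) := by
      rw [eb4]; linarith [hβ₃]
    -- fourth junction
    have eQ' : gp ι (g * h ^ (e + 1)) x (g * h ^ (e + 2)) = gp ι h⁻¹ g⁻¹ 1 := by
      have ee := gp_inv hι (g * h ^ (e + 2)) h⁻¹ g⁻¹ 1
      have i1 : g * h ^ (e + 2) * h⁻¹ = g * h ^ (e + 1) := by rw [hp2']; group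
      have i2 : g * h ^ (e + 2) * g⁻¹ = x := hxgh.symm
      have i3 : g * h ^ (e + 2) * 1 = g * h ^ (e + 2) := by group
      rw [i1, i2, i3] at ee
      exact ee
    have f4 := four' (g * h ^ (e + 1)) x 1 (g * h ^ (e + 2))
    have fA4 : 3 * δ + 1 < gp ι (g * h ^ (e + 1)) 1 (g * h ^ (e + 2)) := by
      rw [gp_symm ι (g * h ^ (e + 1)) 1 (g * h ^ (e + 2))]; linarith [hb4]
    have f4' : min (gp ι (g * h ^ (e + 1)) 1 (g * h ^ (e + 2)))
        (gp ι x 1 (g * h ^ (e + 2))) ≤ 3 * δ + 1 :=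
      le_trans f4 (by rw [eQ']; linarith [hQ'])
    have hβ₄ : gp ι 1 x (g * h ^ (e + 2)) ≤ 3 * δ + 1 := by
      have hc := min_cut f4' fA4
      rwa [gp_symm ι x 1 (g * h ^ (e + 2))] at hc
    have ex : (wordLength S x : ℝ)
        = wordLength S (g * h ^ (e + 2)) + wordLength S g
          - 2 * gp ι 1 x (g * h ^ (e + 2)) := by
      have ee := gp_eq hι 1 x (g * h ^ (e + 2))
      have i1 : (1:G)⁻¹ * (g * h ^ (e + 2)) = g * h ^ (e + 2) := by group
      have i2 : x⁻¹ * (g * h ^ (e + 2)) = g := by rw [hxgh]; group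
      have i3 : (1:G)⁻¹ * x = x := by group
      rw [i1, i2, i3] at ee
      rw [ee]; ring
    rw [hhR, hgR]
    linarith [egh, eghe1, eghe2, ex, hβ₁, hβ₂, hβ₃, hβ₄]
end

section
/- Let G be a hyperbolic group with finite symmetric generating set S, word length |·|, and δ ≥ 1 a hyperbolicity constant for the Cayley graph (δ-thin triangles). Let C be a conjugacy class with |C| ≥ 16δ and let h ∈ C be an element of minimal word length in C. Then for every integer d ≥ 2: |h| + |h^{d−1}| ≤ |h^d| + 4δ, and consequently |h| + |h^{d−2}| + |h| ≤ |h^d| + 8δ. -/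
namespace Stmt7Aux

section WordStuff
variable {G : Type*} [Group G] {S : Set G}

lemma wordLength_le {l : List G} (hl : ∀ x ∈ l, x ∈ S) :
    wordLength S l.prod ≤ l.length := Nat.sInf_le ⟨l, hl, rfl, rfl⟩

lemma exists_word (hSsymm : ∀ s ∈ S, s⁻¹ ∈ S) (hSgen : Subgroup.closure S = ⊤) (g : G) :
    ∃ l : List G, (∀ x ∈ l, x ∈ S) ∧ l.prod = g := by
  have hg : g ∈ Subgroup.closure S := hSgen ▸ Subgroup.mem_top g
  induction hg using Subgroup.closure_induction with
  | mem x hx => exact ⟨[x], by simpa using hx, by simp⟩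
  | one => exact ⟨[], by simp, by simp⟩
  | mul x y hx hy ihx ihy =>
    obtain ⟨l₁, hl₁, hp₁⟩ := ihx
    obtain ⟨l₂, hl₂, hp₂⟩ := ihy
    refine ⟨l₁ ++ l₂, ?_, by simp [hp₁, hp₂]⟩
    intro a ha
    rcases List.mem_append.1 ha with ha | ha
    · exact hl₁ a ha
    · exact hl₂ a ha
  | inv x hx ihx =>
    obtain ⟨l, hl, hp⟩ := ihx
    refine ⟨(l.map fun a => a⁻¹).reverse, ?_, ?_⟩
    · intro a ha
      simp only [List.mem_reverse, List.mem_map] at ha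
      obtain ⟨b, hb, rfl⟩ := ha
      exact hSsymm b (hl b hb)
    · rw [← List.prod_inv_reverse, hp]

lemma exists_geodesic_word {g : G} (hne : ∃ l : List G, (∀ x ∈ l, x ∈ S) ∧ l.prod = g) :
    ∃ l : List G, (∀ x ∈ l, x ∈ S) ∧ l.prod = g ∧ l.length = wordLength S g := by
  obtain ⟨l, hl, hp⟩ := hne
  have : ({n | ∃ l : List G, (∀ x ∈ l, x ∈ S) ∧ l.prod = g ∧ l.length = n} : Set ℕ).Nonempty :=
    ⟨l.length, l, hl, hp, rfl⟩
  obtain ⟨l', hl', hp', hlen⟩ := Nat.sInf_mem this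
  exact ⟨l', hl', hp', hlen⟩

/-- A contiguous segment of a geodesic word is geodesic. -/
lemma segment_geodesic {p u s : List G}
    (hl : ∀ x ∈ p ++ u ++ s, x ∈ S)
    (hgeo : wordLength S (p ++ u ++ s).prod = (p ++ u ++ s).length) :
    wordLength S u.prod = u.length := by
  have huS : ∀ x ∈ u, x ∈ S := fun x hx => hl x (by simp [hx])
  refine le_antisymm (wordLength_le huS) ?_
  by_contra hlt
  push_neg at hlt
  obtain ⟨u', hu'S, hu'p, hu'len⟩ := exists_geodesic_word ⟨u, huS, rfl⟩
  have hmem : ∀ x ∈ p ++ u' ++ s, x ∈ S := by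
    intro x hx
    simp only [List.mem_append] at hx
    rcases hx with (hx | hx) | hx
    · exact hl x (by simp [hx])
    · exact hu'S x hx
    · exact hl x (by simp [hx])
  have hprod : (p ++ u' ++ s).prod = (p ++ u ++ s).prod := by
    simp [List.prod_append, hu'p]
  have hle : wordLength S (p ++ u ++ s).prod ≤ (p ++ u' ++ s).length := by
    rw [← hprod]; exact wordLength_le hmem
  rw [hgeo] at hle
  simp only [List.length_append] at hle
  omega

end WordStuff

section Geometry
variable {X : Type*} [MetricSpace X]

lemma geodSeg_nonempty {γ : ℝ → X} {x y : X} (hγ : IsGeodesicFrom γ x y) :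
    (geodSeg γ x y).Nonempty :=
  ⟨x, 0, ⟨le_refl 0, dist_nonneg⟩, hγ.1⟩

lemma left_mem_geodSeg {γ : ℝ → X} {x y : X} (hγ : IsGeodesicFrom γ x y) :
    x ∈ geodSeg γ x y := ⟨0, ⟨le_refl 0, dist_nonneg⟩, hγ.1⟩

lemma right_mem_geodSeg {γ : ℝ → X} {x y : X} (hγ : IsGeodesicFrom γ x y) :
    y ∈ geodSeg γ x y := ⟨dist x y, ⟨dist_nonneg, le_refl _⟩, hγ.2.1⟩

lemma geodSeg_compact {γ : ℝ → X} {x y : X} (hγ : IsGeodesicFrom γ x y) :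
    IsCompact (geodSeg γ x y) := by
  refine isCompact_Icc.image_of_continuousOn ?_
  refine (LipschitzOnWith.of_dist_le_mul (K := 1) ?_).continuousOn
  intro s hs t ht
  rw [hγ.2.2 s hs t ht, NNReal.coe_one, one_mul, Real.dist_eq]

lemma dist_left_geod {γ : ℝ → X} {x y : X} (hγ : IsGeodesicFrom γ x y) {t : ℝ}
    (ht : t ∈ Set.Icc (0 : ℝ) (dist x y)) : dist x (γ t) = t := by
  have h0 : (0 : ℝ) ∈ Set.Icc (0 : ℝ) (dist x y) := ⟨le_refl 0, dist_nonneg⟩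
  rw [← hγ.1, hγ.2.2 0 h0 t ht, abs_of_nonpos (by linarith [ht.1]), neg_sub, sub_zero]

lemma dist_right_geod {γ : ℝ → X} {x y : X} (hγ : IsGeodesicFrom γ x y) {t : ℝ}
    (ht : t ∈ Set.Icc (0 : ℝ) (dist x y)) : dist (γ t) y = dist x y - t := by
  have h1 : dist x y ∈ Set.Icc (0 : ℝ) (dist x y) := ⟨dist_nonneg, le_refl _⟩
  have h2 := hγ.2.2 t ht (dist x y) h1
  rw [hγ.2.1] at h2
  rw [h2, abs_of_nonpos (by linarith [ht.2])]
  ring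

lemma gromovProd_le_infDist {γ : ℝ → X} {x y : X} (hγ : IsGeodesicFrom γ x y) (z : X) :
    gromovProd x y z ≤ Metric.infDist z (geodSeg γ x y) := by
  obtain ⟨q, hq, hqd⟩ := (geodSeg_compact hγ).exists_infDist_eq_dist (geodSeg_nonempty hγ) z
  obtain ⟨t, ht, rfl⟩ := hq
  have h1 : dist x (γ t) = t := dist_left_geod hγ ht
  have h2 : dist (γ t) y = dist x y - t := dist_right_geod hγ ht
  have hxz : dist x z ≤ t + dist (γ t) z := by
    calc dist x z ≤ dist x (γ t) + dist (γ t) z := dist_triangle _ _ _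
    _ = t + dist (γ t) z := by rw [h1]
  have hyz : dist y z ≤ (dist x y - t) + dist (γ t) z := by
    calc dist y z ≤ dist y (γ t) + dist (γ t) z := dist_triangle _ _ _
    _ = (dist x y - t) + dist (γ t) z := by rw [dist_comm y (γ t), h2]
  rw [hqd, dist_comm z (γ t)]
  unfold gromovProd
  linarith

/-- Concatenation of two geodesics whose lengths add up is a geodesic. -/
lemma concat_geodesic {α β : ℝ → X} {x p y : X}
    (hα : IsGeodesicFrom α x p) (hβ : IsGeodesicFrom β p y)
    (hsum : dist x y = dist x p + dist p y) :
    ∃ γ : ℝ → X, IsGeodesicFrom γ x y ∧ p ∈ geodSeg γ x y := by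
  set c := dist x p with hc
  set e := dist p y with he
  have hc0 : (0:ℝ) ≤ c := dist_nonneg
  have he0' : (0:ℝ) ≤ e := dist_nonneg
  have key : ∀ s ∈ Set.Icc (0:ℝ) (dist x y), ∀ t ∈ Set.Icc (0:ℝ) (dist x y), s ≤ t →
      dist ((fun u => if u ≤ c then α u else β (u - c)) s)
        ((fun u => if u ≤ c then α u else β (u - c)) t) = t - s := by
    intro s hs t ht hst
    simp only
    by_cases hsc : s ≤ c
    · by_cases htc : t ≤ c
      · rw [if_pos hsc, if_pos htc, hα.2.2 s ⟨hs.1, hsc⟩ t ⟨ht.1, htc⟩,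
          abs_of_nonpos (by linarith)]
        ring
      · push_neg at htc
        rw [if_pos hsc, if_neg (not_le.2 htc)]
        have htm : t - c ∈ Set.Icc (0:ℝ) e := by
          constructor
          · linarith
          · have := ht.2; rw [hsum] at this; linarith
        have h0e : (0:ℝ) ∈ Set.Icc (0:ℝ) e := ⟨le_refl 0, he0'⟩
        have hsc' : s ∈ Set.Icc (0:ℝ) c := ⟨hs.1, hsc⟩
        have hcc : c ∈ Set.Icc (0:ℝ) c := ⟨hc0, le_refl _⟩
        have hd1 : dist (α s) p = c - s := by
          have h' := hα.2.2 s hsc' c hcc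
          rw [hα.2.1] at h'
          rw [h', abs_of_nonpos (by linarith)]
          ring
        have hd2 : dist p (β (t - c)) = t - c := by
          have h' := hβ.2.2 0 h0e (t - c) htm
          rw [hβ.1] at h'
          rw [h', abs_of_nonpos (by linarith [htm.1]), neg_sub, sub_zero]
        have hub : dist (α s) (β (t - c)) ≤ t - s := by
          calc dist (α s) (β (t - c)) ≤ dist (α s) p + dist p (β (t - c)) :=
            dist_triangle _ _ _
          _ = t - s := by rw [hd1, hd2]; ring
        have hd3 : dist x (α s) = s := by
          have h' := hα.2.2 0 ⟨le_refl 0, hc0⟩ s hsc'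
          rw [hα.1] at h'
          rw [h', abs_of_nonpos (by linarith [hs.1]), neg_sub, sub_zero]
        have hd4 : dist (β (t - c)) y = e - (t - c) := by
          have hee : e ∈ Set.Icc (0:ℝ) e := ⟨he0', le_refl _⟩
          have h' := hβ.2.2 (t - c) htm e hee
          rw [hβ.2.1] at h'
          rw [h', abs_of_nonpos (by linarith [htm.2])]
          ring
        have hlb : dist x y ≤ s + dist (α s) (β (t - c)) + (e - (t - c)) := by
          calc dist x y ≤ dist x (α s) + dist (α s) y := dist_triangle _ _ _
          _ ≤ dist x (α s) + (dist (α s) (β (t - c)) + dist (β (t - c)) y) := by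
              linarith [dist_triangle (α s) (β (t - c)) y]
          _ = s + dist (α s) (β (t - c)) + (e - (t - c)) := by rw [hd3, hd4]; ring
        rw [hsum] at hlb
        linarith
    · push_neg at hsc
      have htc : ¬ t ≤ c := by push_neg; linarith
      rw [if_neg (not_le.2 hsc), if_neg htc]
      have hsm : s - c ∈ Set.Icc (0:ℝ) e := by
        constructor
        · linarith
        · have := hs.2; rw [hsum] at this; linarith
      have htm : t - c ∈ Set.Icc (0:ℝ) e := by
        constructor
        · linarith
        · have := ht.2; rw [hsum] at this; linarith
      rw [hβ.2.2 (s - c) hsm (t - c) htm, abs_of_nonpos (by linarith)]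
      ring
  refine ⟨fun u => if u ≤ c then α u else β (u - c), ⟨?_, ?_, ?_⟩, ?_⟩
  · simp only [if_pos hc0]
    exact hα.1
  · by_cases hce : dist x y ≤ c
    · have hezero : e = 0 := by linarith [hsum, hce, he0']
      have hpy : p = y := dist_eq_zero.mp (by rw [← he, hezero])
      have hcd : dist x y = c := by rw [hsum, hezero, add_zero]
      simp only [if_pos hce]
      rw [hcd, hc, hα.2.1]
      exact hpy
    · push_neg at hce
      simp only [if_neg (not_le.2 hce)]
      have h5 : dist x y - c = e := by rw [hsum]; ring
      rw [h5, hβ.2.1]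
  · intro s hs t ht
    rcases le_total s t with hst | hst
    · rw [key s hs t ht hst, abs_of_nonpos (by linarith)]
      ring
    · rw [dist_comm, key t ht s hs hst, abs_of_nonneg (by linarith)]
  · refine ⟨c, ⟨hc0, by rw [hsum]; linarith⟩, ?_⟩
    simp only [if_pos (le_refl c)]
    exact hα.2.1

/-- A subsegment of a geodesic, between two of its points, with image inside. -/
lemma subseg_geodesic {γ : ℝ → X} {x y : X} (hγ : IsGeodesicFrom γ x y)
    {s₁ s₂ : ℝ} (h₁ : s₁ ∈ Set.Icc (0:ℝ) (dist x y)) (h₂ : s₂ ∈ Set.Icc (0:ℝ) (dist x y)) :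
    ∃ β : ℝ → X, IsGeodesicFrom β (γ s₁) (γ s₂) ∧
      geodSeg β (γ s₁) (γ s₂) ⊆ geodSeg γ x y := by
  have hd : dist (γ s₁) (γ s₂) = |s₁ - s₂| := hγ.2.2 s₁ h₁ s₂ h₂
  rcases le_total s₁ s₂ with hle | hle
  · have hd' : dist (γ s₁) (γ s₂) = s₂ - s₁ := by
      rw [hd, abs_of_nonpos (by linarith)]; ring
    refine ⟨fun t => γ (s₁ + t), ⟨by simp, by rw [hd']; ring_nf, ?_⟩, ?_⟩
    · intro s hs t ht
      rw [hd'] at hs ht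
      have hs' : s₁ + s ∈ Set.Icc (0:ℝ) (dist x y) :=
        ⟨by linarith [h₁.1, hs.1], by linarith [h₂.2, hs.2]⟩
      have ht' : s₁ + t ∈ Set.Icc (0:ℝ) (dist x y) :=
        ⟨by linarith [h₁.1, ht.1], by linarith [h₂.2, ht.2]⟩
      rw [hγ.2.2 _ hs' _ ht']
      congr 1; ring
    · rintro q ⟨t, ht, rfl⟩
      rw [hd'] at ht
      exact ⟨s₁ + t, ⟨by linarith [h₁.1, ht.1], by linarith [h₂.2, ht.2]⟩, rfl⟩
  · have hd' : dist (γ s₁) (γ s₂) = s₁ - s₂ := by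
      rw [hd, abs_of_nonneg (by linarith)]
    refine ⟨fun t => γ (s₁ - t), ⟨by simp, by rw [hd']; ring_nf, ?_⟩, ?_⟩
    · intro s hs t ht
      rw [hd'] at hs ht
      have hs' : s₁ - s ∈ Set.Icc (0:ℝ) (dist x y) :=
        ⟨by linarith [h₂.1, hs.2], by linarith [h₁.2, hs.1]⟩
      have ht' : s₁ - t ∈ Set.Icc (0:ℝ) (dist x y) :=
        ⟨by linarith [h₂.1, ht.2], by linarith [h₁.2, ht.1]⟩
      rw [hγ.2.2 _ hs' _ ht']
      rw [show s₁ - s - (s₁ - t) = -(s - t) by ring, abs_neg]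
    · rintro q ⟨t, ht, rfl⟩
      rw [hd'] at ht
      exact ⟨s₁ - t, ⟨by linarith [h₂.1, ht.2], by linarith [h₁.2, ht.1]⟩, rfl⟩

end Geometry
end Stmt7Aux

namespace Stmt7Aux
section Morse
variable {X : Type*} [MetricSpace X]

open Metric

/-- Vertices of a discrete local geodesic stay 2δ-close to a geodesic joining the endpoints. -/
lemma morse {δ : ℝ} (hδ : 0 < δ)
    (hgeod : GeodesicSpace X) (hthin : ThinTriangles X δ)
    (N m : ℕ) (v : ℕ → X)
    (hdist : ∀ j k : ℕ, j ≤ k → k ≤ N → k - j ≤ m → dist (v j) (v k) = ((k - j : ℕ) : ℝ))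
    (hs4 : 4 * δ < ((m / 2 : ℕ) : ℝ))
    {γ : ℝ → X} (hγ : IsGeodesicFrom γ (v 0) (v N)) :
    ∀ i ≤ N, Metric.infDist (v i) (geodSeg γ (v 0) (v N)) ≤ 2 * δ := by
  set K := geodSeg γ (v 0) (v N) with hK
  have hKc : IsCompact K := geodSeg_compact hγ
  have hKne : K.Nonempty := geodSeg_nonempty hγ
  obtain ⟨j₀, hj₀mem, hj₀max⟩ := Finset.exists_max_image (Finset.range (N + 1))
    (fun j => Metric.infDist (v j) K) ⟨0, by simp⟩
  have hj₀ : j₀ ≤ N := by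
    have := Finset.mem_range.mp hj₀mem
    omega
  set M := Metric.infDist (v j₀) K with hM
  have hmax : ∀ j ≤ N, Metric.infDist (v j) K ≤ M := by
    intro j hj
    exact hj₀max j (Finset.mem_range.mpr (by omega))
  suffices hfin : M ≤ 2 * δ by
    intro i hi
    exact le_trans (hmax i hi) hfin
  by_contra hcon
  push_neg at hcon
  set s := m / 2 with hs
  set j₁ := j₀ - s with hj₁
  set j₂ := min (j₀ + s) N with hj₂
  have hj₁₀ : j₁ ≤ j₀ := by omega
  have hj₀₂ : j₀ ≤ j₂ := by omega
  have hj₂N : j₂ ≤ N := by omega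
  have hw₁ : j₀ - j₁ ≤ m := by omega
  have hw₂ : j₂ - j₀ ≤ m := by omega
  have hw₃ : j₂ - j₁ ≤ m := by omega
  have dap : dist (v j₁) (v j₀) = ((j₀ - j₁ : ℕ) : ℝ) := hdist j₁ j₀ hj₁₀ hj₀ hw₁
  have dpb : dist (v j₀) (v j₂) = ((j₂ - j₀ : ℕ) : ℝ) := hdist j₀ j₂ hj₀₂ hj₂N hw₂
  have dab : dist (v j₁) (v j₂) = ((j₂ - j₁ : ℕ) : ℝ) :=
    hdist j₁ j₂ (le_trans hj₁₀ hj₀₂) hj₂N hw₃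
  have hsum : dist (v j₁) (v j₂) = dist (v j₁) (v j₀) + dist (v j₀) (v j₂) := by
    rw [dap, dpb, dab]
    have : j₂ - j₁ = (j₀ - j₁) + (j₂ - j₀) := by omega
    rw [this]
    push_cast
    ring
  obtain ⟨α, hα⟩ := hgeod (v j₁) (v j₀)
  obtain ⟨β, hβ⟩ := hgeod (v j₀) (v j₂)
  obtain ⟨γ₁, hγ₁, hpmem⟩ := concat_geodesic hα hβ hsum
  obtain ⟨a', ha'K, ha'd⟩ := hKc.exists_infDist_eq_dist hKne (v j₁)
  obtain ⟨b', hb'K, hb'd⟩ := hKc.exists_infDist_eq_dist hKne (v j₂)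
  obtain ⟨γ₂, hγ₂⟩ := hgeod (v j₂) b'
  obtain ⟨γ₃, hγ₃⟩ := hgeod b' (v j₁)
  have h1 := hthin (v j₁) (v j₂) b' γ₁ γ₂ γ₃ hγ₁ hγ₂ hγ₃ (v j₀) hpmem
  have hU : IsCompact (geodSeg γ₂ (v j₂) b' ∪ geodSeg γ₃ b' (v j₁)) :=
    (geodSeg_compact hγ₂).union (geodSeg_compact hγ₃)
  have hUne : (geodSeg γ₂ (v j₂) b' ∪ geodSeg γ₃ b' (v j₁)).Nonempty :=
    (geodSeg_nonempty hγ₂).mono Set.subset_union_left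
  obtain ⟨u, hu, hud⟩ := hU.exists_infDist_eq_dist hUne (v j₀)
  have hud' : dist (v j₀) u ≤ δ := by rw [← hud]; exact h1
  rcases hu with hu | hu
  · -- u on side [v j₂, b']
    obtain ⟨t, ht, rfl⟩ := hu
    have h2 : dist (v j₂) (γ₂ t) = t := dist_left_geod hγ₂ ht
    have h3 : dist (γ₂ t) b' = dist (v j₂) b' - t := dist_right_geod hγ₂ ht
    have htlb : ((j₂ - j₀ : ℕ) : ℝ) - δ ≤ t := by
      have h6 := dist_triangle (v j₂) (γ₂ t) (v j₀)
      rw [h2, dist_comm (v j₂) (v j₀), dist_comm (γ₂ t) (v j₀)] at h6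
      linarith [hud', h6, dpb]
    have hMle : M ≤ dist (v j₀) b' := Metric.infDist_le_dist_of_mem hb'K
    have hchain : dist (v j₀) b' ≤ δ + (dist (v j₂) b' - t) := by
      calc dist (v j₀) b' ≤ dist (v j₀) (γ₂ t) + dist (γ₂ t) b' := dist_triangle _ _ _
      _ ≤ δ + (dist (v j₂) b' - t) := by rw [h3]; linarith [hud']
    rcases le_or_gt (j₀ + s) N with hcase | hcase
    · have hj₂eq : j₂ = j₀ + s := by omega
      have hseq : ((j₂ - j₀ : ℕ) : ℝ) = (s : ℝ) := by rw [hj₂eq]; norm_num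
      have hfb : dist (v j₂) b' ≤ M := by rw [← hb'd]; exact hmax j₂ hj₂N
      have : (s : ℝ) ≤ 2 * δ := by
        rw [← hseq]
        linarith [hMle, hchain, htlb, hfb]
      linarith [hs4]
    · have hj₂eq : j₂ = N := by omega
      have hfb : dist (v j₂) b' = 0 := by
        rw [← hb'd, hj₂eq]
        exact Metric.infDist_zero_of_mem (right_mem_geodSeg hγ)
      have ht0 : (0:ℝ) ≤ t := ht.1
      linarith [hMle, hchain, hfb, ht0, hcon]
  · -- u on diagonal [b', v j₁]; second thin triangle
    have ha'K' := ha'K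
    obtain ⟨s₁, hs₁, ha'eq⟩ := ha'K
    obtain ⟨s₂, hs₂, hb'eq⟩ := hb'K
    obtain ⟨β', hβ'g, hβ'sub⟩ := subseg_geodesic hγ hs₁ hs₂
    rw [ha'eq, hb'eq] at hβ'g hβ'sub
    obtain ⟨γ₂', hγ₂'⟩ := hgeod (v j₁) a'
    have h2 := hthin b' (v j₁) a' γ₃ γ₂' β' hγ₃ hγ₂' hβ'g u hu
    have hU2 : IsCompact (geodSeg γ₂' (v j₁) a' ∪ geodSeg β' a' b') :=
      (geodSeg_compact hγ₂').union (geodSeg_compact hβ'g)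
    have hU2ne : (geodSeg γ₂' (v j₁) a' ∪ geodSeg β' a' b').Nonempty :=
      (geodSeg_nonempty hγ₂').mono Set.subset_union_left
    obtain ⟨q, hq, hqd⟩ := hU2.exists_infDist_eq_dist hU2ne u
    have hqd' : dist u q ≤ δ := by rw [← hqd]; exact h2
    have hpq : dist (v j₀) q ≤ 2 * δ := by
      calc dist (v j₀) q ≤ dist (v j₀) u + dist u q := dist_triangle _ _ _
      _ ≤ 2 * δ := by linarith [hud', hqd']
    rcases hq with hq | hq
    · -- q on side [v j₁, a']
      obtain ⟨t, ht, rfl⟩ := hq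
      have h3 : dist (v j₁) (γ₂' t) = t := dist_left_geod hγ₂' ht
      have h4 : dist (γ₂' t) a' = dist (v j₁) a' - t := dist_right_geod hγ₂' ht
      have hpq2 : dist (γ₂' t) (v j₀) ≤ 2 * δ := by rw [dist_comm]; exact hpq
      have htlb : ((j₀ - j₁ : ℕ) : ℝ) - 2 * δ ≤ t := by
        have h5 := dist_triangle (v j₁) (v j₀) (γ₂' t)
        have h6 := dist_triangle (v j₁) (γ₂' t) (v j₀)
        rw [h3] at h6
        rw [← dap]
        linarith [h6, hpq2]
      have hMle : M ≤ dist (v j₀) a' := Metric.infDist_le_dist_of_mem ha'K'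
      have hchain : dist (v j₀) a' ≤ 2 * δ + (dist (v j₁) a' - t) := by
        calc dist (v j₀) a' ≤ dist (v j₀) (γ₂' t) + dist (γ₂' t) a' := dist_triangle _ _ _
        _ ≤ 2 * δ + (dist (v j₁) a' - t) := by rw [h4]; linarith [hpq]
      rcases le_or_gt s j₀ with hcase | hcase
      · have hseq : ((j₀ - j₁ : ℕ) : ℝ) = (s : ℝ) := by
          have : j₀ - j₁ = s := by omega
          rw [this]
        have hfa : dist (v j₁) a' ≤ M := by rw [← ha'd]; exact hmax j₁ (by omega)
        have : (s : ℝ) ≤ 4 * δ := by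
          rw [← hseq]
          linarith [hMle, hchain, htlb, hfa]
        linarith [hs4]
      · have hj₁eq : j₁ = 0 := by omega
        have hfa : dist (v j₁) a' = 0 := by
          rw [← ha'd, hj₁eq]
          exact Metric.infDist_zero_of_mem (left_mem_geodSeg hγ)
        linarith [hMle, hchain, hfa, ht.1, hcon]
    · -- q on [a',b'] ⊆ K
      have hqK : q ∈ K := hβ'sub hq
      have : M ≤ dist (v j₀) q := Metric.infDist_le_dist_of_mem hqK
      linarith [hpq, hcon]

end Morse
end Stmt7Aux

namespace Stmt7Aux
variable {G : Type*} [Group G] {S : Set G}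

lemma window_lemma {w : List G} {h : G} {n : ℕ}
    (hwS : ∀ x ∈ w, x ∈ S) (hwp : w.prod = h) (hwl : w.length = n)
    (hgeo : wordLength S h = n)
    (hconj : ∀ g' : G, IsConj h g' → n ≤ wordLength S g')
    (hn : 0 < n) (j k : ℕ) (hjk : j ≤ k) (hkn : k - j ≤ n) :
    wordLength S ((h ^ (j / n) * (w.take (j % n)).prod)⁻¹ *
      (h ^ (k / n) * (w.take (k % n)).prod)) = k - j := by
  have hj := Nat.div_add_mod j n
  have hk := Nat.div_add_mod k n
  have hr : j % n < n := Nat.mod_lt j hn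
  have hr' : k % n < n := Nat.mod_lt k hn
  have hab : j / n ≤ k / n := Nat.div_le_div_right hjk
  have hba : k / n ≤ j / n + 1 := by
    have h1 : k ≤ j + n := by omega
    have h2 : k / n ≤ (j + n) / n := Nat.div_le_div_right h1
    rwa [Nat.add_div_right j hn] at h2
  rcases eq_or_lt_of_le hab with hbe | hlt
  · -- same block of w
    rw [← hbe] at hk ⊢
    have hfacts : j % n ≤ k % n ∧ k - j = k % n - j % n := by
      generalize n * (j / n) = na at hj hk
      omega
    obtain ⟨hrr', hkj⟩ := hfacts
    have htake : w.take (k % n) = w.take (j % n) ++ (w.drop (j % n)).take (k % n - j % n) := by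
      conv_lhs => rw [show k % n = j % n + (k % n - j % n) by omega]
      rw [List.take_add]
    have halg : (h ^ (j / n) * (w.take (j % n)).prod)⁻¹ *
        (h ^ (j / n) * (w.take (k % n)).prod)
        = ((w.drop (j % n)).take (k % n - j % n)).prod := by
      rw [htake, List.prod_append]
      group
    rw [halg, hkj]
    have hweq : w.take (j % n) ++ (w.drop (j % n)).take (k % n - j % n)
        ++ (w.drop (j % n)).drop (k % n - j % n) = w := by
      rw [List.append_assoc, List.take_append_drop, List.take_append_drop]
    have hseg := segment_geodesic (S := S)
      (p := w.take (j % n)) (u := (w.drop (j % n)).take (k % n - j % n))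
      (s := (w.drop (j % n)).drop (k % n - j % n))
      (by intro x hx; apply hwS; rw [← hweq]; exact hx)
      (by rw [hweq, hwp, hwl]; exact hgeo)
    rw [hseg, List.length_take, List.length_drop, hwl]
    omega
  · -- wraps around one boundary
    have hbe : k / n = j / n + 1 := by omega
    have hk2 : n * (j / n) + n + k % n = k := by
      rw [hbe, Nat.mul_succ] at hk
      omega
    have hfacts : k % n ≤ j % n ∧ k - j = (n - j % n) + k % n := by
      generalize n * (j / n) = na at hj hk2
      omega
    obtain ⟨hrr', hkj⟩ := hfacts
    set r := j % n with hrdef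
    set r' := k % n with hr'def
    have hPD : (w.take r).prod * (w.drop r).prod = h := by
      rw [← List.prod_append, List.take_append_drop, hwp]
    have hD : (w.take r).prod⁻¹ * h = (w.drop r).prod := by
      rw [← hPD]; group
    have hpow : h ^ (k / n) = h ^ (j / n) * h := by rw [hbe, pow_succ]
    have halg : (h ^ (j / n) * (w.take r).prod)⁻¹ * (h ^ (k / n) * (w.take r').prod)
        = (w.drop r).prod * (w.take r').prod := by
      have step : (h ^ (j / n) * (w.take r).prod)⁻¹ * (h ^ (k / n) * (w.take r').prod)
          = (w.take r).prod⁻¹ * h * (w.take r').prod := by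
        rw [hpow]; group
      rw [step, hD]
    rw [halg, ← List.prod_append, hkj]
    -- the cyclic word v = drop ++ take is geodesic
    have hvS : ∀ x ∈ w.drop r ++ w.take r, x ∈ S := by
      intro x hx
      rcases List.mem_append.1 hx with hx | hx
      · exact hwS x (List.mem_of_mem_drop hx)
      · exact hwS x (List.mem_of_mem_take hx)
    have hvlen : (w.drop r ++ w.take r).length = n := by
      rw [List.length_append, List.length_drop, List.length_take, hwl]
      omega
    have hvconj : IsConj h (w.drop r ++ w.take r).prod := by
      rw [List.prod_append, isConj_iff]
      refine ⟨(w.take r).prod⁻¹, ?_⟩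
      rw [← hPD]
      group
    have hvgeo : wordLength S (w.drop r ++ w.take r).prod = (w.drop r ++ w.take r).length := by
      refine le_antisymm (wordLength_le hvS) ?_
      rw [hvlen]
      exact hconj _ hvconj
    have hdlen : (w.drop r).length = n - r := by rw [List.length_drop, hwl]
    have hu : (w.drop r ++ w.take r).take (n - r + r') = w.drop r ++ w.take r' := by
      rw [List.take_append, List.take_of_length_le (by rw [hdlen]; omega),
        hdlen]
      congr 1
      rw [show n - r + r' - (n - r) = r' by omega, List.take_take]
      congr 1
      omega
    have heq : [] ++ (w.drop r ++ w.take r') ++ ((w.drop r ++ w.take r).drop (n - r + r'))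
        = w.drop r ++ w.take r := by
      rw [List.nil_append, ← hu, List.take_append_drop]
    have hseg := segment_geodesic (S := S)
      (p := []) (u := w.drop r ++ w.take r')
      (s := (w.drop r ++ w.take r).drop (n - r + r'))
      (by intro x hx; apply hvS; rw [← heq]; exact hx)
      (by rw [heq]; exact hvgeo)
    rw [hseg, List.length_append, List.length_take, List.length_drop, hwl]
    omega

end Stmt7Aux


/-- Let `G` be a hyperbolic group with finite symmetric generating set `S`
and `δ ≥ 1` a hyperbolicity constant for the Cayley graph (δ-thin triangles of its geometric
realization `X`, a geodesic space into which `G` embeds isometrically for the word metric).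
Let `C` be a conjugacy class with `|C| ≥ 16δ` and `h ∈ C` of minimal word length in `C`.
Then for every integer `d ≥ 2`: `|h| + |h^{d−1}| ≤ |h^d| + 4δ`, and consequently
`|h| + |h^{d−2}| + |h| ≤ |h^d| + 8δ`. -/
theorem stmt7 {G : Type*} [Group G] (S : Set G) (hSfin : S.Finite)
    (hSsymm : ∀ s ∈ S, s⁻¹ ∈ S) (hSgen : Subgroup.closure S = ⊤)
    (X : Type*) [MetricSpace X] (ι : G → X)
    (hι : ∀ g h : G, dist (ι g) (ι h) = (wordLength S (g⁻¹ * h) : ℝ))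
    (δ : ℝ) (hδ : 1 ≤ δ)
    (hgeod : GeodesicSpace X) (hthin : ThinTriangles X δ)
    (C : Set G) (hC : ∃ x₀ : G, C = {y | IsConj x₀ y})
    (hCbig : 16 * δ ≤ (minConjLength S C : ℝ))
    (h : G) (hh : h ∈ C) (hmin : wordLength S h = minConjLength S C)
    (d : ℕ) (hd : 2 ≤ d) :
    (wordLength S h : ℝ) + wordLength S (h ^ (d - 1)) ≤ (wordLength S (h ^ d) : ℝ) + 4 * δ ∧
      (wordLength S h : ℝ) + wordLength S (h ^ (d - 2)) + wordLength S h ≤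
        (wordLength S (h ^ d) : ℝ) + 8 * δ := by
  classical
  obtain ⟨x₀, hCdef⟩ := hC
  set n := wordLength S h with hn
  have hδ0 : (0 : ℝ) < δ := by linarith
  have hn16 : 16 * δ ≤ (n : ℝ) := by
    have : (n : ℝ) = (minConjLength S C : ℝ) := by rw [hn]; exact_mod_cast hmin
    linarith
  have hnpos : 0 < n := by
    by_contra h0
    push_neg at h0
    have : n = 0 := by omega
    rw [this] at hn16
    norm_num at hn16
    linarith
  have hconj : ∀ g' : G, IsConj h g' → n ≤ wordLength S g' := by
    intro g' hg'
    have hxh : IsConj x₀ h := by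
      have := hh; rw [hCdef] at this; exact this
    have hg'C : g' ∈ C := by
      rw [hCdef]
      exact hxh.trans hg'
    have h1 : minConjLength S C ≤ wordLength S g' :=
      Nat.sInf_le ⟨g', hg'C, rfl⟩
    omega
  obtain ⟨w, hwS, hwp, hwl⟩ := Stmt7Aux.exists_geodesic_word
    (Stmt7Aux.exists_word hSsymm hSgen h)
  -- hwl : w.length = wordLength S h = n
  set g : ℕ → G := fun j => h ^ (j / n) * (w.take (j % n)).prod with hgdef
  have hg0 : g 0 = 1 := by
    simp [hgdef, Nat.zero_div, Nat.zero_mod]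
  have hgn : g n = h := by
    simp [hgdef, Nat.div_self hnpos, Nat.mod_self]
  have hgN : ∀ e : ℕ, g (e * n) = h ^ e := by
    intro e
    simp [hgdef, Nat.mul_div_cancel _ hnpos, Nat.mul_mod_left]
  have window : ∀ j k : ℕ, j ≤ k → k - j ≤ n →
      wordLength S ((g j)⁻¹ * g k) = k - j := fun j k hjk hkn =>
    Stmt7Aux.window_lemma hwS hwp hwl rfl hconj hnpos j k hjk hkn
  have key : ∀ e : ℕ, 2 ≤ e →
      (wordLength S h : ℝ) + wordLength S (h ^ (e - 1)) ≤
        (wordLength S (h ^ e) : ℝ) + 4 * δ := by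
    intro e he
    set N := e * n with hN
    set v : ℕ → X := fun j => ι (g j) with hv
    have hdist : ∀ j k : ℕ, j ≤ k → k ≤ N → k - j ≤ n →
        dist (v j) (v k) = ((k - j : ℕ) : ℝ) := by
      intro j k hjk _ hkn
      rw [hv]
      simp only
      rw [hι (g j) (g k), window j k hjk hkn]
    have hs4 : 4 * δ < ((n / 2 : ℕ) : ℝ) := by
      have h2 : n ≤ 2 * (n / 2) + 1 := by omega
      have h2' : (n : ℝ) ≤ 2 * ((n / 2 : ℕ) : ℝ) + 1 := by exact_mod_cast h2
      linarith
    obtain ⟨γ, hγ⟩ := hgeod (v 0) (v N)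
    have hmorse := Stmt7Aux.morse hδ0 hgeod hthin N n v hdist hs4 hγ n
      (by rw [hN]; nlinarith [hnpos, he])
    have hgp := Stmt7Aux.gromovProd_le_infDist hγ (v n)
    have htot : gromovProd (v 0) (v N) (v n) ≤ 2 * δ := le_trans hgp hmorse
    have hd1 : dist (v 0) (v n) = (wordLength S h : ℝ) := by
      rw [hv]; simp only
      rw [hι (g 0) (g n), hg0, hgn, inv_one, one_mul]
    have hd2 : dist (v N) (v n) = (wordLength S (h ^ (e - 1)) : ℝ) := by
      rw [hv]; simp only
      rw [dist_comm, hι (g n) (g N), hgn, hN, hgN e]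
      congr 2
      have hpow : h ^ e = h * h ^ (e - 1) := by
        rw [← pow_succ']
        congr 1
        omega
      rw [hpow, inv_mul_cancel_left]
    have hd3 : dist (v 0) (v N) = (wordLength S (h ^ e) : ℝ) := by
      rw [hv]; simp only
      rw [hι (g 0) (g N), hg0, hN, hgN e, inv_one, one_mul]
    rw [gromovProd, hd1, hd2, hd3] at htot
    linarith
  constructor
  · exact key d hd
  · rcases eq_or_lt_of_le hd with hde | hd3
    · -- d = 2
      subst hde  -- ?? hde : 2 = d
      have k1 := key 2 (le_refl 2)
      have hone : wordLength S (h ^ (2 - 2)) = 0 := by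
        norm_num
        have h1 : wordLength S (List.prod ([] : List G)) ≤ 0 :=
          Stmt7Aux.wordLength_le (by simp)
        simp at h1
        omega
      rw [hone]
      push_cast
      norm_num at k1 ⊢
      linarith
    · have hd3' : 3 ≤ d := hd3
      have k1 := key d (by omega)
      have k2 := key (d - 1) (by omega)
      have heq : (d - 1) - 1 = d - 2 := by omega
      rw [heq] at k2
      linarith
end
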